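/- arXiv:1609.08172 — 6 statements merged into one kernel-verified Lean document; each statement's English description precedes it below -/
import Mathlib

section
/- Let d, t ≥ 1 and let ψ_1, …, ψ_K be unit vectors in ℂ^d. Then the t-th frame potential Φ_t := (1/K²)·Σ_{j,k=1}^{K} |⟨ψ_j, ψ_k⟩|^{2t} satisfies Φ_t ≥ 1/C(d+t−1, t), and equality holds if and only if (1/K)·Σ_{j=1}^{K} (|ψ_j⟩⟨ψ_j|)^{⊗t} = P_[t]/C(d+t−1, t), i.e. if and only if {ψ_j} is a complex projective t-design. -/
open scoped BigOperators

noncomputable section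

/-- `t`-fold tensor (Kronecker) power of a matrix, acting on `(ℂ^α)^{⊗t}`. -/
def tpow {α : Type*} [Fintype α] (M : Matrix α α ℂ) (t : ℕ) :
    Matrix (Fin t → α) (Fin t → α) ℂ :=
  Matrix.of fun x y => ∏ i, M (x i) (y i)

/-- The rank-one operator `|ψ⟩⟨ψ|`. -/
def rankOne {α : Type*} (ψ : α → ℂ) : Matrix α α ℂ :=
  Matrix.of fun i j => ψ i * (starRingEnd ℂ) (ψ j)

/-- The operator `U_σ` permuting the `t` tensor factors of `(ℂ^α)^{⊗t}`. -/
def permOp (α : Type*) [DecidableEq α] {t : ℕ} (σ : Equiv.Perm (Fin t)) :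
    Matrix (Fin t → α) (Fin t → α) ℂ :=
  Matrix.of fun x y => if (fun k => x (σ k)) = y then 1 else 0

/-- The projector `P_[t]` onto the symmetric subspace `Sym_t(ℂ^α)`. -/
def symProj (α : Type*) [DecidableEq α] (t : ℕ) :
    Matrix (Fin t → α) (Fin t → α) ℂ :=
  (t.factorial : ℂ)⁻¹ • ∑ σ : Equiv.Perm (Fin t), permOp α σ

section helpers

set_option linter.unusedSectionVars false

open Matrix Finset

variable {α : Type*} [Fintype α] [DecidableEq α] {t : ℕ}

lemma tpow_rankOne (ψ : α → ℂ) (t : ℕ) :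
    tpow (rankOne ψ) t = rankOne (fun x : Fin t → α => ∏ i, ψ (x i)) := by
  ext x y
  simp [tpow, rankOne, Finset.prod_mul_distrib, map_prod]

lemma permOp_mul_permOp (σ τ : Equiv.Perm (Fin t)) :
    permOp α σ * permOp α τ = permOp α (σ * τ) := by
  ext x y
  simp only [Matrix.mul_apply, permOp, Matrix.of_apply, ite_mul, one_mul, zero_mul]
  rw [Finset.sum_ite_eq Finset.univ (fun k => x (σ k))
    (fun z => if (fun k => z (τ k)) = y then (1 : ℂ) else 0)]
  simp [Equiv.Perm.mul_apply]
  congr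

lemma permOp_mul_rankOne (σ : Equiv.Perm (Fin t)) (Ψ : (Fin t → α) → ℂ)
    (hΨ : ∀ (σ : Equiv.Perm (Fin t)) (x : Fin t → α), Ψ (fun k => x (σ k)) = Ψ x) :
    permOp α σ * rankOne Ψ = rankOne Ψ := by
  ext x y
  simp only [Matrix.mul_apply, permOp, rankOne, Matrix.of_apply, ite_mul, one_mul, zero_mul]
  rw [Finset.sum_ite_eq Finset.univ (fun k => x (σ k))
    (fun z => Ψ z * (starRingEnd ℂ) (Ψ y))]
  simp [hΨ σ x]

lemma rankOne_mul_permOp (σ : Equiv.Perm (Fin t)) (Ψ : (Fin t → α) → ℂ)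
    (hΨ : ∀ (σ : Equiv.Perm (Fin t)) (x : Fin t → α), Ψ (fun k => x (σ k)) = Ψ x) :
    rankOne Ψ * permOp α σ = rankOne Ψ := by
  ext x y
  have hcond : ∀ z : Fin t → α, ((fun k => z (σ k)) = y) ↔ (z = fun k => y (σ⁻¹ k)) := by
    intro z
    constructor
    · rintro rfl; funext k; simp
    · rintro rfl; funext k; simp
  simp only [Matrix.mul_apply, permOp, rankOne, Matrix.of_apply, mul_ite, mul_one, mul_zero]
  simp_rw [hcond]
  rw [Finset.sum_ite_eq' Finset.univ (fun k => y (σ⁻¹ k))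
    (fun z => Ψ x * (starRingEnd ℂ) (Ψ z))]
  simp [hΨ σ⁻¹ y]
  exact Or.inl (congrArg _ (hΨ σ⁻¹ y))

lemma permOp_conjTranspose (σ : Equiv.Perm (Fin t)) :
    (permOp α σ)ᴴ = permOp α σ⁻¹ := by
  ext x y
  have hcond : ((fun k => y (σ k)) = x) ↔ ((fun k => x (σ⁻¹ k)) = y) := by
    constructor
    · rintro rfl; funext k; simp
    · rintro rfl; funext k; simp
  simp only [Matrix.conjTranspose_apply, permOp, Matrix.of_apply, hcond]
  split <;> simp

lemma rankOne_conjTranspose (Ψ : α → ℂ) : (rankOne Ψ)ᴴ = rankOne Ψ := by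
  ext x y
  simp [Matrix.conjTranspose_apply, rankOne]
  ring

lemma sum_prod_eq_pow (g : α → ℂ) (t : ℕ) :
    ∑ x : Fin t → α, ∏ i, g (x i) = (∑ a, g a) ^ t := by
  rw [← Fintype.piFinset_univ, ← Finset.prod_univ_sum]
  simp [Finset.prod_const]

end helpers

section burnside

open Matrix Finset MulAction

lemma exists_comp_perm {n : ℕ} {β : Type*} [LinearOrder β] {x y : Fin n → β}
    (h : List.Perm (List.ofFn x) (List.ofFn y)) :
    ∃ σ : Equiv.Perm (Fin n), y ∘ σ = x := by
  haveI : IsAntisymm β (· ≤ ·) := ⟨fun a b => le_antisymm⟩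
  have hxy : x ∘ Tuple.sort x = y ∘ Tuple.sort y := by
    apply List.ofFn_injective
    refine (fun hp h1 h2 => List.Perm.eq_of_sortedLE h1 h2 hp) ?_ ?_ ?_
    · exact ((Tuple.sort x).ofFn_comp_perm x).trans
        (h.trans ((Tuple.sort y).ofFn_comp_perm y).symm)
    · exact List.sortedLE_ofFn_iff.mpr (Tuple.monotone_sort x)
    · exact List.sortedLE_ofFn_iff.mpr (Tuple.monotone_sort y)
  refine ⟨Tuple.sort y * (Tuple.sort x)⁻¹, funext fun k => ?_⟩
  have h2 := congrFun hxy ((Tuple.sort x)⁻¹ k)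
  simp only [Function.comp_apply, Equiv.Perm.inv_def, Equiv.apply_symm_apply] at h2
  simpa using h2.symm

attribute [local instance] arrowAction

lemma smul_fun_def {d t : ℕ} (σ : Equiv.Perm (Fin t)) (x : Fin t → Fin d) :
    σ • x = x ∘ ⇑σ⁻¹ := rfl

def orbitEquivSym (d t : ℕ) :
    Quotient (orbitRel (Equiv.Perm (Fin t)) (Fin t → Fin d)) ≃ Sym (Fin d) t := by
  refine Equiv.ofBijective
    (Quotient.lift (fun x : Fin t → Fin d =>
        (⟨(List.ofFn x : Multiset (Fin d)), by simp⟩ : Sym (Fin d) t)) ?_) ⟨?_, ?_⟩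
  · rintro x y hxy
    obtain ⟨σ, rfl⟩ := MulAction.mem_orbit_iff.mp hxy
    apply Subtype.ext
    simp only [Multiset.coe_eq_coe, smul_fun_def]
    exact Equiv.Perm.ofFn_comp_perm σ⁻¹ y
  · rintro ⟨x⟩ ⟨y⟩ hxy
    have h : List.Perm (List.ofFn x) (List.ofFn y) :=
      Multiset.coe_eq_coe.mp (congrArg Subtype.val hxy)
    obtain ⟨σ, hσ⟩ := exists_comp_perm h
    apply Quotient.sound
    exact MulAction.mem_orbit_iff.mpr ⟨σ⁻¹, by rw [smul_fun_def]; simpa using hσ⟩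
  · rintro ⟨m, hm⟩
    set l := m.toList with hl
    have hlm : (l : Multiset (Fin d)) = m := Multiset.coe_toList m
    have hlen : l.length = t := by
      rw [← Multiset.coe_card, hlm, hm]
    refine ⟨⟦fun i => l.get (Fin.cast hlen.symm i)⟧, ?_⟩
    apply Subtype.ext
    show ((List.ofFn fun i => l.get (Fin.cast hlen.symm i)) : Multiset (Fin d)) = m
    rw [← hlm]
    congr 1
    apply List.ext_get
    · simp [hlen]
    · intro i h1 h2
      simp [List.get_ofFn]

lemma trace_symProj (d t : ℕ) :
    Matrix.trace (symProj (Fin d) t) = ((d + t - 1).choose t : ℂ) := by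
  classical
  letI : Fintype (Quotient (orbitRel (Equiv.Perm (Fin t)) (Fin t → Fin d))) :=
    Fintype.ofFinite _
  have hcard : Fintype.card (Quotient (orbitRel (Equiv.Perm (Fin t)) (Fin t → Fin d)))
      = (d + t - 1).choose t := by
    rw [Fintype.card_congr (orbitEquivSym d t), Sym.card_sym_eq_choose, Fintype.card_fin]
  have hfix : ∀ σ : Equiv.Perm (Fin t),
      Matrix.trace (permOp (Fin d) σ⁻¹) = (Fintype.card (fixedBy (Fin t → Fin d) σ) : ℂ) := by
    intro σ
    rw [Fintype.card_subtype]
    rw [Finset.card_filter]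
    push_cast
    simp only [Matrix.trace, Matrix.diag_apply, permOp, Matrix.of_apply]
    apply Finset.sum_congr rfl
    intro x _
    have : ((fun k => x (σ⁻¹ k)) = x) ↔ (x ∈ fixedBy (Fin t → Fin d) σ) := by
      rw [mem_fixedBy, smul_fun_def]
      constructor
      · intro h; funext a; exact congrFun h a
      · intro h; funext a; exact congrFun h a
    simp only [this]
  have hburn := MulAction.sum_card_fixedBy_eq_card_orbits_mul_card_group
      (Equiv.Perm (Fin t)) (Fin t → Fin d)
  have hsum : ∑ σ : Equiv.Perm (Fin t), Matrix.trace (permOp (Fin d) σ)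
      = ((d + t - 1).choose t * t.factorial : ℂ) := by
    rw [← Equiv.sum_comp (Equiv.inv (Equiv.Perm (Fin t)))
      (fun σ => Matrix.trace (permOp (Fin d) σ))]
    simp only [Equiv.inv_apply]
    rw [Finset.sum_congr rfl (fun σ _ => hfix σ)]
    rw [← Nat.cast_sum, hburn, hcard, Fintype.card_perm, Fintype.card_fin]
    push_cast
    ring
  rw [symProj, Matrix.trace_smul, Matrix.trace_sum, hsum]
  have hfac : (t.factorial : ℂ) ≠ 0 := Nat.cast_ne_zero.mpr (Nat.factorial_ne_zero t)
  field_simp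
  rw [smul_eq_mul, one_div, ← mul_assoc, inv_mul_cancel₀ hfac, one_mul]

end burnside

open Matrix Finset in
/-- For unit vectors `ψ_1, …, ψ_K` in `ℂ^d`, the `t`-th frame potential
`Φ_t = (1/K²)·Σ_{j,k} |⟨ψ_j, ψ_k⟩|^{2t}` is at least `1/C(d+t−1, t)`, with equality iff
`(1/K)·Σ_j (|ψ_j⟩⟨ψ_j|)^{⊗t} = P_[t]/C(d+t−1, t)`, i.e. iff `{ψ_j}` is a complex projective
`t`-design. -/
theorem stmt0 (d t K : ℕ) (hd : 1 ≤ d) (ht : 1 ≤ t) (hK : 1 ≤ K)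
    (ψ : Fin K → (Fin d → ℂ))
    (hunit : ∀ j, ∑ i, (starRingEnd ℂ) (ψ j i) * ψ j i = 1) :
    1 / ((d + t - 1).choose t : ℝ) ≤
      (1 / (K : ℝ) ^ 2) *
        ∑ j, ∑ k, ‖∑ i, (starRingEnd ℂ) (ψ j i) * ψ k i‖ ^ (2 * t) ∧
    ((1 / (K : ℝ) ^ 2) *
        ∑ j, ∑ k, ‖∑ i, (starRingEnd ℂ) (ψ j i) * ψ k i‖ ^ (2 * t)
        = 1 / ((d + t - 1).choose t : ℝ) ↔
      (K : ℂ)⁻¹ • ∑ j, tpow (rankOne (ψ j)) t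
        = (((d + t - 1).choose t : ℂ))⁻¹ • symProj (Fin d) t) := by
  classical
  have hDpos : 0 < (d + t - 1).choose t := Nat.choose_pos (by omega)
  set D := (d + t - 1).choose t with hD
  set Φr := (1 / (K : ℝ) ^ 2) *
      ∑ j, ∑ k, ‖∑ i, (starRingEnd ℂ) (ψ j i) * ψ k i‖ ^ (2 * t) with hΦr
  have hDC : (D : ℂ) ≠ 0 := Nat.cast_ne_zero.mpr hDpos.ne'
  have hDR : (D : ℝ) ≠ 0 := Nat.cast_ne_zero.mpr hDpos.ne'
  have hKC : (K : ℂ) ≠ 0 := Nat.cast_ne_zero.mpr (by omega)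
  have hfac : (t.factorial : ℂ) ≠ 0 := Nat.cast_ne_zero.mpr (Nat.factorial_ne_zero t)
  set Ψ : Fin K → (Fin t → Fin d) → ℂ := fun j x => ∏ i, ψ j (x i) with hΨ
  have hΨsym : ∀ j (σ : Equiv.Perm (Fin t)) (x : Fin t → Fin d),
      Ψ j (fun k => x (σ k)) = Ψ j x :=
    fun j σ x => Equiv.prod_comp σ (fun i => ψ j (x i))
  obtain ⟨M, hM⟩ : ∃ M' : Matrix (Fin t → Fin d) (Fin t → Fin d) ℂ,
      M' = (K : ℂ)⁻¹ • ∑ j, rankOne (Ψ j) := ⟨_, rfl⟩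
  obtain ⟨P, hP⟩ : ∃ P' : Matrix (Fin t → Fin d) (Fin t → Fin d) ℂ,
      P' = symProj (Fin d) t := ⟨_, rfl⟩
  -- basic algebraic facts
  have hpermM : ∀ σ : Equiv.Perm (Fin t), permOp (Fin d) σ * M = M := by
    intro σ
    rw [hM, Matrix.mul_smul, Finset.mul_sum]
    congr 1
    exact Finset.sum_congr rfl fun j _ => permOp_mul_rankOne σ (Ψ j) (hΨsym j)
  have hMperm : ∀ σ : Equiv.Perm (Fin t), M * permOp (Fin d) σ = M := by
    intro σ
    rw [hM, Matrix.smul_mul, Finset.sum_mul]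
    congr 1
    exact Finset.sum_congr rfl fun j _ => rankOne_mul_permOp σ (Ψ j) (hΨsym j)
  have hpermP : ∀ σ : Equiv.Perm (Fin t), permOp (Fin d) σ * P = P := by
    intro σ
    rw [hP, symProj, Matrix.mul_smul, Finset.mul_sum]
    congr 1
    rw [Finset.sum_congr rfl (fun τ _ => permOp_mul_permOp σ τ)]
    simpa using Equiv.sum_comp (Equiv.mulLeft σ) (permOp (Fin d))
  have haux : ∀ A : Matrix (Fin t → Fin d) (Fin t → Fin d) ℂ,
      (∀ σ : Equiv.Perm (Fin t), permOp (Fin d) σ * A = A) → P * A = A := by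
    intro A hA
    rw [hP, symProj, Matrix.smul_mul, Finset.sum_mul]
    rw [Finset.sum_congr rfl (fun σ _ => hA σ)]
    rw [Finset.sum_const, Finset.card_univ, Fintype.card_perm, Fintype.card_fin]
    rw [← Nat.cast_smul_eq_nsmul ℂ, smul_smul, inv_mul_cancel₀ hfac, one_smul]
  have hPM : P * M = M := haux M hpermM
  have hPP : P * P = P := haux P hpermP
  have hMP : M * P = M := by
    rw [hP, symProj, Matrix.mul_smul, Finset.mul_sum]
    rw [Finset.sum_congr rfl (fun σ _ => hMperm σ)]
    rw [Finset.sum_const, Finset.card_univ, Fintype.card_perm, Fintype.card_fin]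
    rw [← Nat.cast_smul_eq_nsmul ℂ, smul_smul, inv_mul_cancel₀ hfac, one_smul]
  have hPH : Pᴴ = P := by
    rw [hP, symProj, Matrix.conjTranspose_smul, Matrix.conjTranspose_sum]
    congr 1
    · simp
    · rw [Finset.sum_congr rfl (fun σ _ => permOp_conjTranspose σ)]
      simpa using Equiv.sum_comp (Equiv.inv (Equiv.Perm (Fin t))) (permOp (Fin d))
  have hMH : Mᴴ = M := by
    rw [hM, Matrix.conjTranspose_smul, Matrix.conjTranspose_sum]
    congr 1
    · simp
    · exact Finset.sum_congr rfl fun j _ => rankOne_conjTranspose (Ψ j)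
  have htrP : Matrix.trace P = (D : ℂ) := by rw [hP, hD]; exact trace_symProj d t
  have htrM : Matrix.trace M = 1 := by
    rw [hM, Matrix.trace_smul, Matrix.trace_sum, smul_eq_mul]
    have h1 : ∀ j, Matrix.trace (rankOne (Ψ j)) = 1 := by
      intro j
      have e : Matrix.trace (rankOne (Ψ j))
          = ∑ x : Fin t → Fin d, ∏ i, (ψ j (x i) * (starRingEnd ℂ) (ψ j (x i))) := by
        simp only [Matrix.trace, Matrix.diag_apply, rankOne, Matrix.of_apply, hΨ]
        exact Finset.sum_congr rfl fun x _ => by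
          rw [Finset.prod_mul_distrib, map_prod]
      have hone : (∑ a, ψ j a * (starRingEnd ℂ) (ψ j a)) = 1 := by
        rw [← hunit j]
        exact Finset.sum_congr rfl fun a _ => mul_comm _ _
      rw [e]
      exact (sum_prod_eq_pow (fun a => ψ j a * (starRingEnd ℂ) (ψ j a)) t).trans
        (by rw [hone, one_pow])
    rw [Finset.sum_congr rfl (fun j _ => h1 j), Finset.sum_const, Finset.card_univ,
      Fintype.card_fin, nsmul_eq_mul, mul_one, inv_mul_cancel₀ hKC]
  -- trace of M * M equals the frame potential
  have htr2 : ∀ j k, Matrix.trace (rankOne (Ψ j) * rankOne (Ψ k))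
      = ((‖∑ i, (starRingEnd ℂ) (ψ j i) * ψ k i‖ ^ (2 * t) : ℝ) : ℂ) := by
    intro j k
    set z := ∑ i, (starRingEnd ℂ) (ψ j i) * ψ k i with hz
    have e1 : Matrix.trace (rankOne (Ψ j) * rankOne (Ψ k))
        = (∑ x, (starRingEnd ℂ) (Ψ j x) * Ψ k x) * (∑ x, Ψ j x * (starRingEnd ℂ) (Ψ k x)) := by
      rw [Finset.sum_mul_sum]
      simp only [Matrix.trace, Matrix.diag_apply, Matrix.mul_apply, rankOne, Matrix.of_apply,
        Finset.sum_mul, Finset.mul_sum]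
      rw [Finset.sum_comm]
      exact Finset.sum_congr rfl fun y _ => Finset.sum_congr rfl fun x _ => by ring
    have e2 : (∑ x, (starRingEnd ℂ) (Ψ j x) * Ψ k x) = z ^ t := by
      have h : ∀ x : Fin t → Fin d, (starRingEnd ℂ) (Ψ j x) * Ψ k x
          = ∏ i, ((starRingEnd ℂ) (ψ j (x i)) * ψ k (x i)) := by
        intro x
        rw [Finset.prod_mul_distrib, hΨ, map_prod]
      simp_rw [h]
      exact (sum_prod_eq_pow (fun a => (starRingEnd ℂ) (ψ j a) * ψ k a) t).trans
        (by rw [hz])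
    have e3 : (∑ x, Ψ j x * (starRingEnd ℂ) (Ψ k x)) = ((starRingEnd ℂ) z) ^ t := by
      have h : ∀ x : Fin t → Fin d, Ψ j x * (starRingEnd ℂ) (Ψ k x)
          = ∏ i, (ψ j (x i) * (starRingEnd ℂ) (ψ k (x i))) := by
        intro x
        rw [Finset.prod_mul_distrib, hΨ, map_prod]
      have hconj : (∑ a, ψ j a * (starRingEnd ℂ) (ψ k a)) = (starRingEnd ℂ) z := by
        rw [hz, map_sum]
        exact Finset.sum_congr rfl fun a _ => by
          rw [_root_.map_mul, Complex.conj_conj]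
      simp_rw [h]
      exact (sum_prod_eq_pow (fun a => ψ j a * (starRingEnd ℂ) (ψ k a)) t).trans
        (by rw [hconj])
    rw [e1, e2, e3, ← map_pow, Complex.mul_conj]
    rw [Complex.normSq_eq_norm_sq, norm_pow, ← pow_mul, mul_comm t 2]
  have htrMM : Matrix.trace (M * M) = ((Φr : ℝ) : ℂ) := by
    rw [hM, Matrix.smul_mul, Matrix.mul_smul, Matrix.trace_smul, Matrix.trace_smul,
      smul_eq_mul, smul_eq_mul, Finset.sum_mul_sum]
    simp only [Matrix.trace_sum]
    simp only [htr2]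
    rw [hΦr]
    push_cast
    ring
  -- the deviation matrix
  obtain ⟨N, hN⟩ : ∃ N' : Matrix (Fin t → Fin d) (Fin t → Fin d) ℂ,
      N' = M - (D : ℂ)⁻¹ • P := ⟨_, rfl⟩
  have hNH : Nᴴ = N := by
    rw [hN, Matrix.conjTranspose_sub, hMH, Matrix.conjTranspose_smul, hPH]
    congr 1
    simp
  obtain ⟨Snorm, hSn⟩ : ∃ s : ℝ,
      s = ∑ x : Fin t → Fin d, ∑ y : Fin t → Fin d, Complex.normSq (N x y) := ⟨_, rfl⟩
  have htrNNH : Matrix.trace (N * Nᴴ) = ((Snorm : ℝ) : ℂ) := by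
    rw [hSn]
    simp only [Matrix.trace, Matrix.diag_apply, Matrix.mul_apply, Matrix.conjTranspose_apply]
    push_cast
    exact Finset.sum_congr rfl fun x _ => Finset.sum_congr rfl fun y _ => by
      rw [← Complex.mul_conj]; rfl
  have htrNN : Matrix.trace (N * N) = ((Φr : ℝ) : ℂ) - (D : ℂ)⁻¹ := by
    have expand : N * N = M * M - (D : ℂ)⁻¹ • (P * M)
        - (D : ℂ)⁻¹ • (M * P - (D : ℂ)⁻¹ • (P * P)) := by
      rw [hN]
      simp only [Matrix.sub_mul, Matrix.mul_sub, Matrix.smul_mul, Matrix.mul_smul, smul_smul]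
    rw [expand, hMP, hPM, hPP]
    simp only [Matrix.trace_sub, Matrix.trace_smul, smul_eq_mul]
    rw [htrM, htrP, htrMM, inv_mul_cancel₀ hDC]
    ring
  have hSkey : (Snorm : ℝ) = Φr - (D : ℝ)⁻¹ := by
    have : ((Snorm : ℝ) : ℂ) = ((Φr - (D : ℝ)⁻¹ : ℝ) : ℂ) := by
      rw [← htrNNH, hNH, htrNN]
      push_cast
      ring
    exact_mod_cast this
  have hSnn : (0 : ℝ) ≤ Snorm := by
    rw [hSn]
    apply Finset.sum_nonneg
    intro x _
    exact Finset.sum_nonneg fun y _ => Complex.normSq_nonneg _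
  have hrank : (∑ j, tpow (rankOne (ψ j)) t) = ∑ j, rankOne (Ψ j) :=
    Finset.sum_congr rfl fun j _ => tpow_rankOne (ψ j) t
  constructor
  · rw [one_div]
    linarith [hSkey, hSnn]
  · rw [one_div, hrank, ← hM, ← hP]
    constructor
    · intro h
      have hS0 : ∑ x : Fin t → Fin d, ∑ y : Fin t → Fin d, Complex.normSq (N x y) = 0 := by
        rw [← hSn, hSkey, h]; ring
      have hN0 : N = 0 := by
        ext x y
        have h1 := (Finset.sum_eq_zero_iff_of_nonneg
          (fun x _ => Finset.sum_nonneg fun y _ => Complex.normSq_nonneg (N x y))).mp hS0 x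
          (Finset.mem_univ x)
        have h2 := (Finset.sum_eq_zero_iff_of_nonneg
          (fun y _ => Complex.normSq_nonneg (N x y))).mp h1 y (Finset.mem_univ y)
        simpa using Complex.normSq_eq_zero.mp h2
      have : M - (D : ℂ)⁻¹ • P = 0 := by rw [← hN]; exact hN0
      exact sub_eq_zero.mp this
    · intro h
      have hN0 : N = 0 := by rw [hN, h, sub_self]
      have hS0 : Snorm = 0 := by
        rw [hSn, hN0]
        simp
      linarith [hSkey, hS0]

end
end

section
/- Let d, t ≥ 1 and let μ be the unitarily invariant (uniform) Borel probability measure on the unit sphere of ℂ^d. Then ∫ (|ψ⟩⟨ψ|)^{⊗t} dμ(ψ) = P_[t]/C(d+t−1, t). -/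
open scoped BigOperators

noncomputable section

namespace Stmt1Aux

open MeasureTheory Finset

variable {d : ℕ}

/-- monomial `∏ ψ l ^ m l * conj (ψ l) ^ m' l` -/
def mono (m m' : Fin d → ℕ) (ψ : Fin d → ℂ) : ℂ :=
  ∏ l, ψ l ^ m l * (starRingEnd ℂ) (ψ l) ^ m' l

lemma mono_continuous (m m' : Fin d → ℕ) : Continuous (mono m m') := by
  apply continuous_finset_prod
  intro l _
  exact ((continuous_apply l).pow _).mul
    ((Complex.continuous_conj.comp (continuous_apply l)).pow _)

variable (μ : Measure (Fin d → ℂ)) [IsProbabilityMeasure μ]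

lemma mono_integrable (hs : ∀ᵐ ψ ∂μ, ∑ i, Complex.normSq (ψ i) = 1)
    (m m' : Fin d → ℕ) : Integrable (mono m m') μ := by
  refine (integrable_const (1 : ℝ)).mono'
    (mono_continuous m m').aestronglyMeasurable ?_
  filter_upwards [hs] with ψ hψ
  have hl : ∀ l, ‖ψ l‖ ≤ 1 := by
    intro l
    have h1 : Complex.normSq (ψ l) ≤ 1 := by
      rw [← hψ]
      exact Finset.single_le_sum (f := fun i => Complex.normSq (ψ i))
        (fun i _ => Complex.normSq_nonneg _) (mem_univ l)
    have h2 : ‖ψ l‖ = ‖ψ l‖ := rfl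
    rw [h2]
    nlinarith [norm_nonneg (ψ l), Complex.sq_norm (ψ l)]
  rw [mono]
  calc ‖∏ l, ψ l ^ m l * (starRingEnd ℂ) (ψ l) ^ m' l‖
      = ∏ l, ‖ψ l ^ m l * (starRingEnd ℂ) (ψ l) ^ m' l‖ := by
        simp [norm_prod]
    _ ≤ 1 := by
        apply Finset.prod_le_one
        · intro l _; positivity
        · intro l _
          rw [norm_mul, norm_pow, norm_pow, RCLike.norm_conj]
          exact mul_le_one₀ (pow_le_one₀ (norm_nonneg _) (hl l))
            (by positivity) (pow_le_one₀ (norm_nonneg _) (hl l))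

lemma integral_comp_unitary
    (hinv : ∀ U ∈ Matrix.unitaryGroup (Fin d) ℂ,
      Measure.map (fun ψ => Matrix.mulVec U ψ) μ = μ)
    (U : Matrix (Fin d) (Fin d) ℂ) (hU : U ∈ Matrix.unitaryGroup (Fin d) ℂ)
    (f : (Fin d → ℂ) → ℂ) (hf : Continuous f) :
    ∫ ψ, f (U.mulVec ψ) ∂μ = ∫ ψ, f ψ ∂μ := by
  have hcont : Continuous fun ψ : Fin d → ℂ => U.mulVec ψ := by
    apply continuous_pi
    intro i
    exact continuous_finset_sum (univ : Finset (Fin d))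
      (fun l _ => (continuous_const (y := U i l)).mul (continuous_apply l))
  have h := MeasureTheory.integral_map (μ := μ) hcont.aemeasurable
    (f := f) hf.aestronglyMeasurable
  rw [hinv U hU] at h
  exact h.symm


lemma mono_split1 (j : Fin d) (m m' : Fin d → ℕ) (ψ : Fin d → ℂ) :
    mono m m' ψ = (ψ j ^ m j * (starRingEnd ℂ) (ψ j) ^ m' j) *
      ∏ l ∈ univ.erase j, ψ l ^ m l * (starRingEnd ℂ) (ψ l) ^ m' l :=
  (Finset.mul_prod_erase univ _ (mem_univ j)).symm

lemma mono_split2 (j k : Fin d) (hkj : k ≠ j) (m m' : Fin d → ℕ) (ψ : Fin d → ℂ) :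
    mono m m' ψ = (ψ j ^ m j * (starRingEnd ℂ) (ψ j) ^ m' j) *
      ((ψ k ^ m k * (starRingEnd ℂ) (ψ k) ^ m' k) *
        ∏ l ∈ (univ.erase j).erase k, ψ l ^ m l * (starRingEnd ℂ) (ψ l) ^ m' l) := by
  rw [mono_split1 j,
    ← Finset.mul_prod_erase (univ.erase j) _ (Finset.mem_erase.2 ⟨hkj, mem_univ k⟩)]

lemma phase_zero
    (hinv : ∀ U ∈ Matrix.unitaryGroup (Fin d) ℂ,
      Measure.map (fun ψ => Matrix.mulVec U ψ) μ = μ)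
    (m m' : Fin d → ℕ) (j : Fin d) (hne : m j ≠ m' j) :
    ∫ ψ, mono m m' ψ ∂μ = 0 := by
  set θ : ℝ := Real.pi / ((m j : ℝ) - (m' j : ℝ)) with hθ
  set z : ℂ := Complex.exp (θ * Complex.I) with hz
  have hzz : (starRingEnd ℂ) z * z = 1 := by
    rw [hz, ← Complex.exp_conj, ← Complex.exp_add]
    simp
  set D : Matrix (Fin d) (Fin d) ℂ :=
    Matrix.diagonal (fun l => if l = j then z else 1) with hD
  have hU : D ∈ Matrix.unitaryGroup (Fin d) ℂ := by
    rw [Matrix.mem_unitaryGroup_iff']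
    rw [hD, Matrix.star_eq_conjTranspose, Matrix.diagonal_conjTranspose,
      Matrix.diagonal_mul_diagonal]
    ext i i'
    by_cases h : i = j <;>
      simp [Matrix.diagonal, Matrix.one_apply, h, hzz, Pi.star_apply]
  have key : ∀ ψ : Fin d → ℂ, mono m m' (D.mulVec ψ)
      = (z ^ m j * (starRingEnd ℂ) z ^ m' j) * mono m m' ψ := by
    intro ψ
    have hvec : ∀ l, (D.mulVec ψ) l = (if l = j then z else 1) * ψ l := by
      intro l; rw [hD, Matrix.mulVec_diagonal]
    rw [mono, mono]
    calc (∏ l, (D.mulVec ψ) l ^ m l * (starRingEnd ℂ) ((D.mulVec ψ) l) ^ m' l)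
        = ∏ l, ((if l = j then z else 1) ^ m l
            * (starRingEnd ℂ) (if l = j then z else 1) ^ m' l)
            * (ψ l ^ m l * (starRingEnd ℂ) (ψ l) ^ m' l) := by
          apply Finset.prod_congr rfl
          intro l _
          rw [hvec l, map_mul, mul_pow, mul_pow]
          ring
      _ = (z ^ m j * (starRingEnd ℂ) z ^ m' j) *
            ∏ l, ψ l ^ m l * (starRingEnd ℂ) (ψ l) ^ m' l := by
          rw [Finset.prod_mul_distrib]
          congr 1
          rw [Finset.prod_eq_single j]
          · simp
          · intro l _ hl; simp [hl]
          · intro h; exact absurd (mem_univ j) h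
  have h0 := integral_comp_unitary μ hinv D hU (mono m m') (mono_continuous m m')
  rw [show (fun ψ => mono m m' (D.mulVec ψ)) = fun ψ =>
      (z ^ m j * (starRingEnd ℂ) z ^ m' j) * mono m m' ψ from funext key] at h0
  rw [integral_const_mul] at h0
  have hfac : z ^ m j * (starRingEnd ℂ) z ^ m' j = -1 := by
    rw [hz, ← Complex.exp_conj, ← Complex.exp_nat_mul, ← Complex.exp_nat_mul,
      ← Complex.exp_add]
    have hsub : ((m j : ℝ) - (m' j : ℝ)) ≠ 0 := by
      have : (m j : ℝ) ≠ (m' j : ℝ) := by exact_mod_cast hne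
      exact sub_ne_zero.2 this
    have hC : ((m j : ℂ) - (m' j : ℂ)) ≠ 0 := by
      have : (m j : ℂ) ≠ (m' j : ℂ) := by exact_mod_cast hne
      exact sub_ne_zero.2 this
    have harg : (m j : ℂ) * (θ * Complex.I) + (m' j : ℂ) * (starRingEnd ℂ) (θ * Complex.I)
        = (Real.pi : ℂ) * Complex.I := by
      have h1 : (starRingEnd ℂ) ((θ : ℂ) * Complex.I) = -((θ : ℂ) * Complex.I) := by simp
      have h2 : (θ : ℂ) = (Real.pi : ℂ) / ((m j : ℂ) - (m' j : ℂ)) := by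
        rw [hθ]; push_cast; ring
      rw [h1, h2]
      field_simp
      ring
    rw [harg, Complex.exp_pi_mul_I]
  rw [hfac, neg_one_mul] at h0
  have h2 : (2 : ℂ) * ∫ ψ, mono m m' ψ ∂μ = 0 := by linear_combination -h0
  exact (mul_eq_zero.mp h2).resolve_left two_ne_zero


lemma sum_rule (hs : ∀ᵐ ψ ∂μ, ∑ i, Complex.normSq (ψ i) = 1) (n : Fin d → ℕ) :
    ∑ j, ∫ ψ, mono (Function.update n j (n j + 1)) (Function.update n j (n j + 1)) ψ ∂μ
      = ∫ ψ, mono n n ψ ∂μ := by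
  rw [← integral_finset_sum _ (fun j _ => mono_integrable μ hs _ _)]
  apply integral_congr_ae
  filter_upwards [hs] with ψ hψ
  have hj : ∀ j : Fin d, mono (Function.update n j (n j + 1))
      (Function.update n j (n j + 1)) ψ
      = (ψ j * (starRingEnd ℂ) (ψ j)) * mono n n ψ := by
    intro j
    rw [mono_split1 (m := Function.update n j (n j + 1))
      (m' := Function.update n j (n j + 1)) j, mono_split1 (m := n) (m' := n) j]
    have hrest : ∏ l ∈ univ.erase j, ψ l ^ (Function.update n j (n j + 1) l)
        * (starRingEnd ℂ) (ψ l) ^ (Function.update n j (n j + 1) l)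
        = ∏ l ∈ univ.erase j, ψ l ^ n l * (starRingEnd ℂ) (ψ l) ^ n l := by
      apply Finset.prod_congr rfl
      intro l hl
      rw [Function.update_of_ne (Finset.mem_erase.1 hl).1]
    rw [hrest, Function.update_self]
    ring
  calc (∑ j, mono (Function.update n j (n j + 1)) (Function.update n j (n j + 1)) ψ)
      = (∑ j, ψ j * (starRingEnd ℂ) (ψ j)) * mono n n ψ := by
        rw [Finset.sum_mul]
        exact Finset.sum_congr rfl fun j _ => hj j
    _ = mono n n ψ := by
        have : (∑ j, ψ j * (starRingEnd ℂ) (ψ j)) = 1 := by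
          have : (∑ j, ψ j * (starRingEnd ℂ) (ψ j))
              = ((∑ j, Complex.normSq (ψ j) : ℝ) : ℂ) := by
            push_cast
            exact Finset.sum_congr rfl fun j _ => (Complex.mul_conj (ψ j))
          rw [this, hψ]; norm_num
        rw [this, one_mul]


lemma sum_pair_ite {M : Type*} [AddCommMonoid M] (j k : Fin d) (hjk : j ≠ k)
    (f : Fin d → M) (hf : ∀ l, l ≠ j → l ≠ k → f l = 0) : ∑ l, f l = f j + f k := by
  rw [← Finset.sum_pair hjk]
  exact (Finset.sum_subset (Finset.subset_univ _) (by
    intro l _ hl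
    simp only [Finset.mem_insert, Finset.mem_singleton, not_or] at hl
    exact hf l hl.1 hl.2)).symm

def rotMat (j k : Fin d) (c s : ℝ) : Matrix (Fin d) (Fin d) ℂ :=
  Matrix.of fun i l =>
    if i = j then (if l = j then (c : ℂ) else if l = k then (s : ℂ) else 0)
    else if i = k then (if l = j then -(s : ℂ) else if l = k then (c : ℂ) else 0)
    else (if l = i then 1 else 0)

lemma rotMat_mem (j k : Fin d) (hjk : j ≠ k) (c s : ℝ) (h1 : c ^ 2 + s ^ 2 = 1) :
    rotMat j k c s ∈ Matrix.unitaryGroup (Fin d) ℂ := by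
  have h1C : (c : ℂ) ^ 2 + (s : ℂ) ^ 2 = 1 := by exact_mod_cast h1
  rw [Matrix.mem_unitaryGroup_iff]
  ext i i'
  rw [Matrix.mul_apply]
  simp only [Matrix.star_apply, RCLike.star_def]
  rcases eq_or_ne i j with hij | hij
  · rcases eq_or_ne i' j with hi'j | hi'j
    · rw [sum_pair_ite j k hjk _ (fun l hl1 hl2 => by simp [rotMat, hij, hi'j, hl1, hl2])]
      simp [rotMat, hij, hi'j, hjk, Ne.symm hjk, Matrix.one_apply]
      linear_combination h1C
    · rcases eq_or_ne i' k with hi'k | hi'k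
      · rw [sum_pair_ite j k hjk _ (fun l hl1 hl2 => by simp [rotMat, hij, hi'k, hl1, hl2])]
        simp [rotMat, hij, hi'k, hjk, Ne.symm hjk, Matrix.one_apply]
        ring
      · rw [sum_pair_ite j k hjk _ (fun l hl1 hl2 => by
          simp [rotMat, hij, hi'j, hi'k, hl1, hl2])]
        simp [rotMat, hij, hjk, Ne.symm hjk, Matrix.one_apply, hi'j, hi'k,
          Ne.symm hi'j, Ne.symm hi'k, fun (h : i = i') => hi'j ((h.symm.trans hij) : i' = j)]
  · rcases eq_or_ne i k with hik | hik
    · rcases eq_or_ne i' j with hi'j | hi'j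
      · rw [sum_pair_ite j k hjk _ (fun l hl1 hl2 => by simp [rotMat, hik, hi'j, hij, hl1, hl2])]
        simp [rotMat, hik, hi'j, hij, hjk, Ne.symm hjk, Matrix.one_apply]
        ring
      · rcases eq_or_ne i' k with hi'k | hi'k
        · rw [sum_pair_ite j k hjk _ (fun l hl1 hl2 => by simp [rotMat, hik, hi'k, hij, hl1, hl2])]
          simp [rotMat, hik, hi'k, hij, hjk, Ne.symm hjk, Matrix.one_apply]
          linear_combination h1C
        · rw [sum_pair_ite j k hjk _ (fun l hl1 hl2 => by
            simp [rotMat, hik, hij, hi'j, hi'k, hl1, hl2])]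
          simp [rotMat, hik, hij, hjk, Ne.symm hjk, Matrix.one_apply, hi'j, hi'k,
            Ne.symm hi'j, Ne.symm hi'k, fun (h : i = i') => hi'k ((h.symm.trans hik) : i' = k)]
    · rw [Finset.sum_eq_single_of_mem i (mem_univ i) (fun l _ hl => by
        simp [rotMat, hij, hik, hl])]
      rcases eq_or_ne i' i with hi' | hi'
      · simp [rotMat, hi', hij, hik, Matrix.one_apply]
      · rcases eq_or_ne i' j with h2 | h2
        · simp [rotMat, h2, hij, hik, Ne.symm hij, Matrix.one_apply, Ne.symm hi']
        · rcases eq_or_ne i' k with h3 | h3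
          · simp [rotMat, h3, hij, hik, Ne.symm hik, Matrix.one_apply, Ne.symm hi']
          · simp [rotMat, h2, h3, hij, hik, hi', Matrix.one_apply, Ne.symm hi']

lemma rotMat_mulVec (j k : Fin d) (hjk : j ≠ k) (c s : ℝ) (ψ : Fin d → ℂ) (l : Fin d) :
    (rotMat j k c s).mulVec ψ l =
      if l = j then (c : ℂ) * ψ j + (s : ℂ) * ψ k
      else if l = k then -(s : ℂ) * ψ j + (c : ℂ) * ψ k
      else ψ l := by
  rw [Matrix.mulVec, dotProduct]
  rcases eq_or_ne l j with hlj | hlj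
  · rw [sum_pair_ite j k hjk _ (fun m hm1 hm2 => by simp [rotMat, hlj, hm1, hm2])]
    simp [rotMat, hlj, hjk, Ne.symm hjk]
  · rcases eq_or_ne l k with hlk | hlk
    · rw [sum_pair_ite j k hjk _ (fun m hm1 hm2 => by simp [rotMat, hlk, hlj, hm1, hm2])]
      simp [rotMat, hlk, hlj, hjk, Ne.symm hjk]
    · rw [Finset.sum_eq_single_of_mem l (mem_univ l) (fun m _ hm => by
        simp [rotMat, hlj, hlk, hm, fun (h : m = l) => hm h])]
      simp [rotMat, hlj, hlk]


/-- index set for the quadruple binomial expansion -/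
def rT (a b : ℕ) : Finset ((ℕ × ℕ) × (ℕ × ℕ)) :=
  (range (a + 2) ×ˢ range (a + 1)) ×ˢ (range (b + 1) ×ˢ range (b + 2))

def rK (a b : ℕ) (i : (ℕ × ℕ) × (ℕ × ℕ)) : ℂ :=
  (((a + 1).choose i.1.1 * a.choose i.1.2 * b.choose i.2.1 * (b + 1).choose i.2.2 : ℕ) : ℂ)
    * (-1 : ℂ) ^ ((b - i.2.1) + (b + 1 - i.2.2))

def rα (i : (ℕ × ℕ) × (ℕ × ℕ)) : ℕ := i.1.1 + i.1.2 + i.2.1 + i.2.2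

def rβ (a b : ℕ) (i : (ℕ × ℕ) × (ℕ × ℕ)) : ℕ :=
  (a + 1 - i.1.1) + (a - i.1.2) + (b - i.2.1) + (b + 1 - i.2.2)

def rM (n : Fin d → ℕ) (j k : Fin d) (i : (ℕ × ℕ) × (ℕ × ℕ)) : Fin d → ℕ :=
  Function.update (Function.update n j (i.1.1 + (n k - i.2.1))) k ((n j + 1 - i.1.1) + i.2.1)

def rM' (n : Fin d → ℕ) (j k : Fin d) (i : (ℕ × ℕ) × (ℕ × ℕ)) : Fin d → ℕ :=
  Function.update (Function.update n j (i.1.2 + (n k + 1 - i.2.2))) k ((n j - i.1.2) + i.2.2)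

lemma sum_swap4 {M : Type*} [AddCommMonoid M] (A B C D : Finset ℕ) (X : ℕ → ℕ → ℕ → ℕ → M) :
    (∑ c ∈ C, ∑ d ∈ D, ∑ a ∈ A, ∑ b ∈ B, X a b c d)
      = ∑ a ∈ A, ∑ b ∈ B, ∑ c ∈ C, ∑ d ∈ D, X a b c d :=
  calc (∑ c ∈ C, ∑ d ∈ D, ∑ a ∈ A, ∑ b ∈ B, X a b c d)
      = ∑ c ∈ C, ∑ a ∈ A, ∑ d ∈ D, ∑ b ∈ B, X a b c d :=
        Finset.sum_congr rfl fun c _ => Finset.sum_comm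
    _ = ∑ a ∈ A, ∑ c ∈ C, ∑ d ∈ D, ∑ b ∈ B, X a b c d := Finset.sum_comm
    _ = ∑ a ∈ A, ∑ c ∈ C, ∑ b ∈ B, ∑ d ∈ D, X a b c d :=
        Finset.sum_congr rfl fun a _ => Finset.sum_congr rfl fun c _ => Finset.sum_comm
    _ = ∑ a ∈ A, ∑ b ∈ B, ∑ c ∈ C, ∑ d ∈ D, X a b c d :=
        Finset.sum_congr rfl fun a _ => Finset.sum_comm

lemma expand4 {M : Type*} [CommRing M] (A B C D : Finset ℕ) (F G H I : ℕ → M) (R0 : M) :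
    (∑ p ∈ A, F p) * (∑ q ∈ B, G q) * ((∑ r ∈ C, H r) * (∑ w ∈ D, I w) * R0)
      = ∑ x ∈ A ×ˢ B, ∑ y ∈ C ×ˢ D, (F x.1 * G x.2) * ((H y.1 * I y.2) * R0) := by
  simp only [Finset.sum_product]
  rw [Finset.sum_mul_sum, Finset.sum_mul_sum]
  simp only [Finset.sum_mul, Finset.mul_sum]
  rw [sum_swap4 A B C D (fun a b c d => F a * G b * (H c * I d * R0))]

lemma rot_expand (j k : Fin d) (hjk : j ≠ k) (n : Fin d → ℕ) (c s : ℝ) (ψ : Fin d → ℂ) :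
    mono (Function.update n j (n j + 1)) (Function.update n k (n k + 1))
        ((rotMat j k c s).mulVec ψ)
      = ∑ i ∈ rT (n j) (n k),
          rK (n j) (n k) i * (c : ℂ) ^ rα i * (s : ℂ) ^ rβ (n j) (n k) i
            * mono (rM n j k i) (rM' n j k i) ψ := by
  have hkj := Ne.symm hjk
  set φ := (rotMat j k c s).mulVec ψ with hφ
  have hφj : φ j = (c : ℂ) * ψ j + (s : ℂ) * ψ k := by
    rw [hφ, rotMat_mulVec j k hjk]; simp
  have hφk : φ k = (c : ℂ) * ψ k + -(s : ℂ) * ψ j := by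
    rw [hφ, rotMat_mulVec j k hjk]; simp [hkj]; ring
  have hcφj : (starRingEnd ℂ) (φ j) = (c : ℂ) * (starRingEnd ℂ) (ψ j)
      + (s : ℂ) * (starRingEnd ℂ) (ψ k) := by
    rw [hφj, map_add, map_mul, map_mul, Complex.conj_ofReal, Complex.conj_ofReal]
  have hcφk : (starRingEnd ℂ) (φ k) = (c : ℂ) * (starRingEnd ℂ) (ψ k)
      + -(s : ℂ) * (starRingEnd ℂ) (ψ j) := by
    rw [hφk, map_add, map_mul, map_mul, map_neg, Complex.conj_ofReal, Complex.conj_ofReal]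
  rw [mono_split2 j k hkj]
  rw [Function.update_self, Function.update_of_ne hjk, Function.update_of_ne hkj,
    Function.update_self]
  have hrest : (∏ l ∈ (univ.erase j).erase k,
        φ l ^ (Function.update n j (n j + 1) l)
          * (starRingEnd ℂ) (φ l) ^ (Function.update n k (n k + 1) l))
      = ∏ l ∈ (univ.erase j).erase k, ψ l ^ n l * (starRingEnd ℂ) (ψ l) ^ n l := by
    apply Finset.prod_congr rfl
    intro l hl
    have hlk : l ≠ k := (Finset.mem_erase.1 hl).1
    have hlj : l ≠ j := (Finset.mem_erase.1 (Finset.mem_erase.1 hl).2).1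
    have hφl : φ l = ψ l := by
      rw [hφ, rotMat_mulVec j k hjk, if_neg hlj, if_neg hlk]
    rw [hφl, Function.update_of_ne hlj, Function.update_of_ne hlk]
  rw [hrest, hφj, hφk]
  simp only [map_add, map_mul, map_neg, Complex.conj_ofReal]
  rw [add_pow, add_pow, add_pow, add_pow]
  have step : ∀ p q r w : ℕ,
      ((c : ℂ) * ψ j) ^ p * ((s : ℂ) * ψ k) ^ (n j + 1 - p) * ((n j + 1).choose p : ℂ)
        * (((c : ℂ) * (starRingEnd ℂ) (ψ j)) ^ q
            * ((s : ℂ) * (starRingEnd ℂ) (ψ k)) ^ (n j - q) * ((n j).choose q : ℂ))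
        * ((((c : ℂ) * ψ k) ^ r * (-(s : ℂ) * ψ j) ^ (n k - r) * ((n k).choose r : ℂ))
            * (((c : ℂ) * (starRingEnd ℂ) (ψ k)) ^ w
                * (-(s : ℂ) * (starRingEnd ℂ) (ψ j)) ^ (n k + 1 - w)
                * ((n k + 1).choose w : ℂ))
            * ∏ l ∈ (univ.erase j).erase k, ψ l ^ n l * (starRingEnd ℂ) (ψ l) ^ n l)
      = rK (n j) (n k) ((p, q), (r, w)) * (c : ℂ) ^ rα ((p, q), (r, w))
          * (s : ℂ) ^ rβ (n j) (n k) ((p, q), (r, w))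
          * mono (rM n j k ((p, q), (r, w))) (rM' n j k ((p, q), (r, w))) ψ := by
    intro p q r w
    have hMj : rM n j k ((p, q), (r, w)) j = p + (n k - r) := by
      simp [rM, Function.update_of_ne hjk]
    have hMk : rM n j k ((p, q), (r, w)) k = (n j + 1 - p) + r := by simp [rM]
    have hM'j : rM' n j k ((p, q), (r, w)) j = q + (n k + 1 - w) := by
      simp [rM', Function.update_of_ne hjk]
    have hM'k : rM' n j k ((p, q), (r, w)) k = (n j - q) + w := by simp [rM']
    have hrest2 : (∏ l ∈ (univ.erase j).erase k,
          ψ l ^ (rM n j k ((p, q), (r, w)) l)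
            * (starRingEnd ℂ) (ψ l) ^ (rM' n j k ((p, q), (r, w)) l))
        = ∏ l ∈ (univ.erase j).erase k, ψ l ^ n l * (starRingEnd ℂ) (ψ l) ^ n l := by
      apply Finset.prod_congr rfl
      intro l hl
      have hlk : l ≠ k := (Finset.mem_erase.1 hl).1
      have hlj : l ≠ j := (Finset.mem_erase.1 (Finset.mem_erase.1 hl).2).1
      simp [rM, rM', Function.update_of_ne hlj, Function.update_of_ne hlk]
    rw [mono_split2 j k hkj, hMj, hMk, hM'j, hM'k, hrest2, rK, rα, rβ]
    have hneg : ∀ (z : ℂ) (e : ℕ),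
        (-(s : ℂ) * z) ^ e = (-1 : ℂ) ^ e * ((s : ℂ) ^ e * z ^ e) := by
      intro z e
      rw [show -(s : ℂ) * z = (-1) * ((s : ℂ) * z) by ring, mul_pow, mul_pow]
    rw [hneg, hneg]
    push_cast
    ring
  rw [expand4]
  conv_rhs => rw [rT, Finset.sum_product]
  refine Finset.sum_congr rfl fun x hx => Finset.sum_congr rfl fun y hy => ?_
  obtain ⟨p, q⟩ := x
  obtain ⟨r, w⟩ := y
  linear_combination step p q r w


lemma rot_sum_zero (hs : ∀ᵐ ψ ∂μ, ∑ i, Complex.normSq (ψ i) = 1)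
    (hinv : ∀ U ∈ Matrix.unitaryGroup (Fin d) ℂ,
      Measure.map (fun ψ => Matrix.mulVec U ψ) μ = μ)
    (j k : Fin d) (hjk : j ≠ k) (n : Fin d → ℕ) (c s : ℝ) (h1 : c ^ 2 + s ^ 2 = 1) :
    ∑ i ∈ rT (n j) (n k), rK (n j) (n k) i * (c : ℂ) ^ rα i * (s : ℂ) ^ rβ (n j) (n k) i
      * ∫ ψ, mono (rM n j k i) (rM' n j k i) ψ ∂μ = 0 := by
  have h0 : ∫ ψ, mono (Function.update n j (n j + 1)) (Function.update n k (n k + 1))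
      ((rotMat j k c s).mulVec ψ) ∂μ = 0 := by
    rw [integral_comp_unitary μ hinv _ (rotMat_mem j k hjk c s h1) _ (mono_continuous _ _)]
    refine phase_zero μ hinv _ _ j ?_
    rw [Function.update_self, Function.update_of_ne hjk]
    omega
  rw [← h0]
  simp only [rot_expand j k hjk n c s]
  rw [integral_finset_sum _ (fun i _ => ((mono_integrable μ hs _ _).const_mul _))]
  refine Finset.sum_congr rfl fun i _ => ?_
  rw [MeasureTheory.integral_const_mul]

lemma rot_hom (hs : ∀ᵐ ψ ∂μ, ∑ i, Complex.normSq (ψ i) = 1)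
    (hinv : ∀ U ∈ Matrix.unitaryGroup (Fin d) ℂ,
      Measure.map (fun ψ => Matrix.mulVec U ψ) μ = μ)
    (j k : Fin d) (hjk : j ≠ k) (n : Fin d → ℕ) (cc : ℝ) :
    ∑ i ∈ rT (n j) (n k), rK (n j) (n k) i * (cc : ℂ) ^ rα i
      * ∫ ψ, mono (rM n j k i) (rM' n j k i) ψ ∂μ = 0 := by
  set r : ℝ := Real.sqrt (cc ^ 2 + 1) with hr
  have hrpos : 0 < r := Real.sqrt_pos.2 (by positivity)
  have hr2 : r ^ 2 = cc ^ 2 + 1 := Real.sq_sqrt (by positivity)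
  have h1 : (cc / r) ^ 2 + (1 / r) ^ 2 = 1 := by
    field_simp
    linarith [hr2]
  have h0 := rot_sum_zero μ hs hinv j k hjk n (cc / r) (1 / r) h1
  have hrC : (r : ℂ) ≠ 0 := by exact_mod_cast hrpos.ne'
  calc ∑ i ∈ rT (n j) (n k), rK (n j) (n k) i * (cc : ℂ) ^ rα i
        * ∫ ψ, mono (rM n j k i) (rM' n j k i) ψ ∂μ
      = (r : ℂ) ^ (2 * (n j) + 2 * (n k) + 2)
          * ∑ i ∈ rT (n j) (n k), rK (n j) (n k) i * ((cc / r : ℝ) : ℂ) ^ rα i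
              * ((1 / r : ℝ) : ℂ) ^ rβ (n j) (n k) i
              * ∫ ψ, mono (rM n j k i) (rM' n j k i) ψ ∂μ := by
        rw [Finset.mul_sum]
        refine Finset.sum_congr rfl fun i hi => ?_
        have hb : rα i + rβ (n j) (n k) i = 2 * (n j) + 2 * (n k) + 2 := by
          simp only [rT, Finset.mem_product, Finset.mem_range] at hi
          simp only [rα, rβ]
          omega
        have key : (((cc / r : ℝ)) : ℂ) ^ rα i * (((1 / r : ℝ)) : ℂ) ^ rβ (n j) (n k) i
            * (r : ℂ) ^ (2 * (n j) + 2 * (n k) + 2) = (cc : ℂ) ^ rα i := by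
          rw [← hb, pow_add]
          push_cast
          rw [div_pow, div_pow, one_pow]
          field_simp
        linear_combination (-(rK (n j) (n k) i * (∫ ψ, mono (rM n j k i) (rM' n j k i) ψ ∂μ))) * key
    _ = (r : ℂ) ^ (2 * (n j) + 2 * (n k) + 2) * 0 := by rw [h0]
    _ = 0 := by ring

lemma rot_rel (hs : ∀ᵐ ψ ∂μ, ∑ i, Complex.normSq (ψ i) = 1)
    (hinv : ∀ U ∈ Matrix.unitaryGroup (Fin d) ℂ,
      Measure.map (fun ψ => Matrix.mulVec U ψ) μ = μ)
    (j k : Fin d) (hjk : j ≠ k) (n : Fin d → ℕ) :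
    ((n j : ℂ) + 1) * ∫ ψ, mono (Function.update n k (n k + 1))
        (Function.update n k (n k + 1)) ψ ∂μ
      = ((n k : ℂ) + 1) * ∫ ψ, mono (Function.update n j (n j + 1))
          (Function.update n j (n j + 1)) ψ ∂μ := by
  have hkj := Ne.symm hjk
  set J : ((ℕ × ℕ) × (ℕ × ℕ)) → ℂ :=
    fun i => ∫ ψ, mono (rM n j k i) (rM' n j k i) ψ ∂μ with hJ
  set P : Polynomial ℂ := ∑ i ∈ rT (n j) (n k),
    Polynomial.C (rK (n j) (n k) i * J i) * Polynomial.X ^ (rα i) with hP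
  have hroot : ∀ cc : ℝ, P.eval (cc : ℂ) = 0 := by
    intro cc
    rw [hP, Polynomial.eval_finset_sum]
    simp only [Polynomial.eval_mul, Polynomial.eval_C, Polynomial.eval_pow, Polynomial.eval_X]
    rw [← rot_hom μ hs hinv j k hjk n cc]
    exact Finset.sum_congr rfl fun i _ => by ring
  have hP0 : P = 0 := by
    apply Polynomial.eq_zero_of_infinite_isRoot
    exact (Set.infinite_range_of_injective Complex.ofReal_injective).mono
      (by rintro _ ⟨cc, rfl⟩; exact hroot cc)
  have hcoeff := congrArg (fun p : Polynomial ℂ => p.coeff (2 * (n j) + 2 * (n k) + 1)) hP0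
  simp only [hP, Polynomial.finset_sum_coeff, Polynomial.coeff_C_mul,
    Polynomial.coeff_X_pow, Polynomial.coeff_zero] at hcoeff
  have hsub : ({((n j, n j), (n k, n k + 1)), ((n j + 1, n j), (n k, n k))} :
      Finset ((ℕ × ℕ) × (ℕ × ℕ))) ⊆ rT (n j) (n k) := by
    intro i hi
    simp only [Finset.mem_insert, Finset.mem_singleton] at hi
    rcases hi with h | h <;> subst h <;>
      (simp only [rT, Finset.mem_product, Finset.mem_range]; omega)
  have hzero : ∀ i ∈ rT (n j) (n k),
      i ∉ ({((n j, n j), (n k, n k + 1)), ((n j + 1, n j), (n k, n k))} :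
        Finset ((ℕ × ℕ) × (ℕ × ℕ))) →
      rK (n j) (n k) i * J i * (if 2 * (n j) + 2 * (n k) + 1 = rα i then 1 else 0) = 0 := by
    intro i hi hnot
    obtain ⟨⟨p, q⟩, r, w⟩ := i
    by_cases hα : 2 * (n j) + 2 * (n k) + 1 = rα ((p, q), (r, w))
    · rw [if_pos hα, mul_one]
      have hJ0 : J ((p, q), (r, w)) = 0 := by
        refine phase_zero μ hinv _ _ j ?_
        have h1 : rM n j k ((p, q), (r, w)) j = p + (n k - r) := by
          rw [rM, Function.update_of_ne hjk, Function.update_self]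
        have h2 : rM' n j k ((p, q), (r, w)) j = q + (n k + 1 - w) := by
          rw [rM', Function.update_of_ne hjk, Function.update_self]
        rw [h1, h2]
        simp only [rT, Finset.mem_product, Finset.mem_range] at hi
        simp only [Finset.mem_insert, Finset.mem_singleton, not_or, Prod.mk.injEq] at hnot
        simp only [rα] at hα
        omega
      rw [hJ0, mul_zero]
    · rw [if_neg hα, mul_zero]
  rw [← Finset.sum_subset hsub hzero] at hcoeff
  have hne : ((n j, n j), (n k, n k + 1)) ≠ ((n j + 1, n j), (n k, n k)) := by
    simp only [ne_eq, Prod.mk.injEq, not_and]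
    omega
  rw [Finset.sum_pair hne] at hcoeff
  have e1 : rM n j k ((n j, n j), (n k, n k + 1)) = Function.update n k (n k + 1) := by
    funext l
    rcases eq_or_ne l k with h | h
    · rw [h, rM, Function.update_self, Function.update_self]
      exact (by omega : n j + 1 - n j + n k = n k + 1)
    · rw [rM, Function.update_of_ne h, Function.update_of_ne h]
      rcases eq_or_ne l j with h2 | h2
      · rw [h2, Function.update_self]
        exact (by omega : n j + (n k - n k) = n j)
      · rw [Function.update_of_ne h2]
  have e1' : rM' n j k ((n j, n j), (n k, n k + 1)) = Function.update n k (n k + 1) := by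
    funext l
    rcases eq_or_ne l k with h | h
    · rw [h, rM', Function.update_self, Function.update_self]
      exact (by omega : n j - n j + (n k + 1) = n k + 1)
    · rw [rM', Function.update_of_ne h, Function.update_of_ne h]
      rcases eq_or_ne l j with h2 | h2
      · rw [h2, Function.update_self]
        exact (by omega : n j + (n k + 1 - (n k + 1)) = n j)
      · rw [Function.update_of_ne h2]
  have e4 : rM n j k ((n j + 1, n j), (n k, n k)) = Function.update n j (n j + 1) := by
    funext l
    rcases eq_or_ne l k with h | h
    · rw [h, rM, Function.update_self, Function.update_of_ne hkj]
      exact (by omega : n j + 1 - (n j + 1) + n k = n k)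
    · rw [rM, Function.update_of_ne h]
      rcases eq_or_ne l j with h2 | h2
      · rw [h2, Function.update_self, Function.update_self]
        exact (by omega : n j + 1 + (n k - n k) = n j + 1)
      · rw [Function.update_of_ne h2, Function.update_of_ne h2]
  have e4' : rM' n j k ((n j + 1, n j), (n k, n k)) = Function.update n j (n j + 1) := by
    funext l
    rcases eq_or_ne l k with h | h
    · rw [h, rM', Function.update_self, Function.update_of_ne hkj]
      exact (by omega : n j - n j + n k = n k)
    · rw [rM', Function.update_of_ne h]
      rcases eq_or_ne l j with h2 | h2
      · rw [h2, Function.update_self, Function.update_self]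
        exact (by omega : n j + (n k + 1 - n k) = n j + 1)
      · rw [Function.update_of_ne h2, Function.update_of_ne h2]
  have hKc1 : rK (n j) (n k) ((n j, n j), (n k, n k + 1)) = ((n j : ℂ) + 1) := by
    simp [rK, Nat.choose_succ_self_right, Nat.sub_self]
  have hKc4 : rK (n j) (n k) ((n j + 1, n j), (n k, n k)) = -((n k : ℂ) + 1) := by
    have hw : n k + 1 - n k = 1 := by omega
    simp [rK, Nat.choose_succ_self_right, Nat.sub_self, hw]
  have hα1 : (if 2 * (n j) + 2 * (n k) + 1 = rα ((n j, n j), (n k, n k + 1)) then (1:ℂ) else 0)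
      = 1 := by
    rw [if_pos]; simp only [rα]; omega
  have hα4 : (if 2 * (n j) + 2 * (n k) + 1 = rα ((n j + 1, n j), (n k, n k)) then (1:ℂ) else 0)
      = 1 := by
    rw [if_pos]; simp only [rα]; omega
  rw [hα1, hα4, mul_one, mul_one, hKc1, hKc4] at hcoeff
  have hJ1 : J ((n j, n j), (n k, n k + 1)) = ∫ ψ, mono (Function.update n k (n k + 1))
      (Function.update n k (n k + 1)) ψ ∂μ := by
    simp only [hJ, e1, e1']
  have hJ4 : J ((n j + 1, n j), (n k, n k)) = ∫ ψ, mono (Function.update n j (n j + 1))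
      (Function.update n j (n j + 1)) ψ ∂μ := by
    simp only [hJ, e4, e4']
  rw [hJ1, hJ4] at hcoeff
  linear_combination hcoeff


lemma base_case : ∫ ψ, mono (fun _ : Fin d => 0) (fun _ : Fin d => 0) ψ ∂μ = 1 := by
  have : (fun ψ : Fin d → ℂ => mono (fun _ => 0) (fun _ => 0) ψ) = fun _ => (1 : ℂ) := by
    funext ψ; simp [mono]
  rw [this, integral_const]
  simp

lemma up_rel (hs : ∀ᵐ ψ ∂μ, ∑ i, Complex.normSq (ψ i) = 1)
    (hinv : ∀ U ∈ Matrix.unitaryGroup (Fin d) ℂ,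
      Measure.map (fun ψ => Matrix.mulVec U ψ) μ = μ)
    (n : Fin d → ℕ) (j : Fin d) :
    (∫ ψ, mono (Function.update n j (n j + 1)) (Function.update n j (n j + 1)) ψ ∂μ)
        * (((∑ l, n l : ℕ) : ℂ) + d)
      = ((n j : ℂ) + 1) * ∫ ψ, mono n n ψ ∂μ := by
  have h1 : ((n j : ℂ) + 1) * ∫ ψ, mono n n ψ ∂μ
      = ∑ k, ((n j : ℂ) + 1) * ∫ ψ, mono (Function.update n k (n k + 1))
          (Function.update n k (n k + 1)) ψ ∂μ := by
    rw [← Finset.mul_sum, sum_rule μ hs n]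
  have h2 : ∀ k : Fin d, ((n j : ℂ) + 1) * ∫ ψ, mono (Function.update n k (n k + 1))
      (Function.update n k (n k + 1)) ψ ∂μ
      = ((n k : ℂ) + 1) * ∫ ψ, mono (Function.update n j (n j + 1))
          (Function.update n j (n j + 1)) ψ ∂μ := by
    intro k
    rcases eq_or_ne j k with h | h
    · rw [h]
    · exact rot_rel μ hs hinv j k h n
  rw [h1, Finset.sum_congr rfl fun k _ => h2 k, ← Finset.sum_mul]
  have h3 : (∑ k : Fin d, ((n k : ℂ) + 1)) = ((∑ l, n l : ℕ) : ℂ) + d := by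
    rw [Finset.sum_add_distrib]
    push_cast
    simp [Finset.card_univ]
  rw [h3, mul_comm]

lemma g_val (hs : ∀ᵐ ψ ∂μ, ∑ i, Complex.normSq (ψ i) = 1)
    (hinv : ∀ U ∈ Matrix.unitaryGroup (Fin d) ℂ,
      Measure.map (fun ψ => Matrix.mulVec U ψ) μ = μ) :
    ∀ (t : ℕ) (n : Fin d → ℕ), (∑ l, n l) = t →
      (∫ ψ, mono n n ψ ∂μ) * ((d.ascFactorial t : ℕ) : ℂ) = ∏ l, (((n l).factorial : ℕ) : ℂ) := by
  intro t
  induction t with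
  | zero =>
    intro n hn
    have hz : ∀ l, n l = 0 := by
      intro l
      have := (Finset.sum_eq_zero_iff).1 hn l (mem_univ l)
      exact this
    have : n = fun _ => 0 := funext hz
    subst this
    rw [base_case]
    simp [Nat.ascFactorial_zero]
  | succ t ih =>
    intro n hn
    have hex : ∃ j, 0 < n j := by
      by_contra hcon
      push_neg at hcon
      have : ∑ l, n l = 0 := Finset.sum_eq_zero fun l _ => Nat.le_zero.1 (hcon l)
      omega
    obtain ⟨j, hj⟩ := hex
    set m : Fin d → ℕ := Function.update n j (n j - 1) with hm
    have hmj : m j = n j - 1 := by rw [hm, Function.update_self]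
    have hmn : Function.update m j (m j + 1) = n := by
      funext l
      rcases eq_or_ne l j with h | h
      · rw [h, Function.update_self, hmj]; omega
      · rw [Function.update_of_ne h, hm, Function.update_of_ne h]
    have hms : ∑ l, m l = t := by
      have e1 : ∑ l, m l = m j + ∑ l ∈ univ.erase j, m l :=
        (Finset.add_sum_erase univ m (mem_univ j)).symm
      have e2 : ∑ l, n l = n j + ∑ l ∈ univ.erase j, n l :=
        (Finset.add_sum_erase univ n (mem_univ j)).symm
      have e3 : ∑ l ∈ univ.erase j, m l = ∑ l ∈ univ.erase j, n l :=
        Finset.sum_congr rfl fun l hl => by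
          rw [hm, Function.update_of_ne (Finset.mem_erase.1 hl).1]
      omega
    have key := up_rel μ hs hinv m j
    rw [hmn, hms] at key
    have ihm := ih m hms
    have hasc : ((d.ascFactorial (t + 1) : ℕ) : ℂ)
        = ((d + t : ℕ) : ℂ) * ((d.ascFactorial t : ℕ) : ℂ) := by
      rw [Nat.ascFactorial_succ]; push_cast; ring
    have split : ∀ e : Fin d → ℕ, ∏ l, (((e l).factorial : ℕ) : ℂ)
        = (((e j).factorial : ℕ) : ℂ) * ∏ l ∈ univ.erase j, (((e l).factorial : ℕ) : ℂ) :=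
      fun e => (Finset.mul_prod_erase univ _ (mem_univ j)).symm
    have hnj : n j = m j + 1 := by rw [hmj]; omega
    calc (∫ ψ, mono n n ψ ∂μ) * ((d.ascFactorial (t + 1) : ℕ) : ℂ)
        = ((∫ ψ, mono n n ψ ∂μ) * (((t : ℕ) : ℂ) + d)) * ((d.ascFactorial t : ℕ) : ℂ) := by
          rw [hasc]; push_cast; ring
      _ = (((m j : ℕ) : ℂ) + 1) * ((∫ ψ, mono m m ψ ∂μ) * ((d.ascFactorial t : ℕ) : ℂ)) := by
          rw [key]; ring
      _ = (((m j : ℕ) : ℂ) + 1) * ∏ l, (((m l).factorial : ℕ) : ℂ) := by rw [ihm]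
      _ = ∏ l, (((n l).factorial : ℕ) : ℂ) := by
          rw [split m, split n]
          have hrest : ∏ l ∈ univ.erase j, (((m l).factorial : ℕ) : ℂ)
              = ∏ l ∈ univ.erase j, (((n l).factorial : ℕ) : ℂ) :=
            Finset.prod_congr rfl fun l hl => by
              rw [hm, Function.update_of_ne (Finset.mem_erase.1 hl).1]
          rw [hrest, hnj, Nat.factorial_succ]
          push_cast
          ring


variable {t : ℕ}

def cnt (x : Fin t → Fin d) (j : Fin d) : ℕ := (univ.filter fun i => x i = j).card

lemma prod_cnt (x : Fin t → Fin d) (f : Fin d → ℂ) :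
    ∏ i, f (x i) = ∏ j, f j ^ cnt x j := by
  rw [Finset.prod_comp]
  refine Finset.prod_subset (Finset.subset_univ _) ?_
  intro j _ hj
  have : cnt x j = 0 := by
    rw [cnt, Finset.card_eq_zero]
    rw [Finset.eq_empty_iff_forall_notMem]
    intro i hi
    exact hj (Finset.mem_image.2 ⟨i, mem_univ i, (Finset.mem_filter.1 hi).2⟩)
  rw [show (Finset.filter (fun i => x i = j) univ).card = cnt x j from rfl, this, pow_zero]

lemma sum_cnt (x : Fin t → Fin d) : ∑ j, cnt x j = t := by
  have := Finset.card_eq_sum_card_fiberwise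
    (f := x) (s := (univ : Finset (Fin t))) (t := (univ : Finset (Fin d)))
    (fun i _ => mem_univ _)
  simpa [cnt, Finset.card_univ] using this.symm

lemma cnt_comp (x : Fin t → Fin d) (σ : Equiv.Perm (Fin t)) : cnt (x ∘ σ) = cnt x := by
  funext j
  refine Finset.card_bij (fun i _ => σ i) ?_ ?_ ?_
  · intro i hi
    simp only [cnt, Finset.mem_filter, Function.comp_apply] at hi ⊢
    exact ⟨mem_univ _, hi.2⟩
  · intro i1 _ i2 _ h
    exact σ.injective h
  · intro i' hi'
    refine ⟨σ.symm i', ?_, by simp⟩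
    simp only [Finset.mem_filter, Function.comp_apply] at hi' ⊢
    exact ⟨mem_univ _, by simpa using hi'.2⟩

lemma cnt_card (x : Fin t → Fin d) (j : Fin d) :
    Fintype.card {i // x i = j} = cnt x j := by
  rw [Fintype.card_subtype]; rfl

lemma exists_perm (x y : Fin t → Fin d) (h : cnt x = cnt y) :
    ∃ σ : Equiv.Perm (Fin t), x ∘ σ = y := by
  have hcard : ∀ j, Fintype.card {i // y i = j} = Fintype.card {i // x i = j} := by
    intro j
    rw [cnt_card, cnt_card, h]
  refine ⟨(Equiv.sigmaFiberEquiv y).symm.trans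
    ((Equiv.sigmaCongrRight fun j => Fintype.equivOfCardEq (hcard j)).trans
      (Equiv.sigmaFiberEquiv x)), funext fun i => ?_⟩
  exact ((Fintype.equivOfCardEq (hcard (y i))) ⟨i, rfl⟩).2

lemma card_fix (x : Fin t → Fin d) :
    Fintype.card {σ : Equiv.Perm (Fin t) // x ∘ σ = x} = ∏ j, (cnt x j).factorial := by
  rw [DomMulAct.stabilizer_card x]
  exact Finset.prod_congr rfl fun j _ => by rw [cnt_card]

lemma card_coset (x y : Fin t → Fin d) (h : cnt x = cnt y) :
    Fintype.card {σ : Equiv.Perm (Fin t) // x ∘ σ = y} = ∏ j, (cnt x j).factorial := by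
  obtain ⟨σ0, hσ0⟩ := exists_perm x y h
  refine (Fintype.card_congr (Equiv.subtypeEquiv (Equiv.mulRight σ0⁻¹) fun σ => ?_)).trans
    (card_fix x)
  constructor
  · intro hσ
    funext i
    show x ((σ * σ0⁻¹) i) = x i
    rw [Equiv.Perm.mul_apply]
    calc x (σ (σ0⁻¹ i)) = y (σ0⁻¹ i) := congrFun hσ _
      _ = x (σ0 (σ0⁻¹ i)) := (congrFun hσ0 _).symm
      _ = x i := by rw [← Equiv.Perm.mul_apply, mul_inv_cancel, Equiv.Perm.one_apply]
  · intro hσ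
    funext i
    have h1 : x ((σ * σ0⁻¹) (σ0 i)) = x (σ0 i) := congrFun hσ (σ0 i)
    rw [Equiv.Perm.mul_apply, ← Equiv.Perm.mul_apply σ0⁻¹, inv_mul_cancel, Equiv.Perm.one_apply] at h1
    exact h1.trans (congrFun hσ0 i)

end Stmt1Aux

open MeasureTheory Stmt1Aux Finset

/-- If `μ` is the unitarily invariant (uniform) Borel probability measure on
the unit sphere of `ℂ^d`, then `∫ (|ψ⟩⟨ψ|)^{⊗t} dμ(ψ) = P_[t]/C(d+t−1, t)` (entrywise). -/
theorem stmt1 (d t : ℕ) (hd : 1 ≤ d) (ht : 1 ≤ t)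
    (μ : Measure (Fin d → ℂ)) [IsProbabilityMeasure μ]
    (hsphere : ∀ᵐ ψ ∂μ, ∑ i, Complex.normSq (ψ i) = 1)
    (hinv : ∀ U ∈ Matrix.unitaryGroup (Fin d) ℂ,
      Measure.map (fun ψ => Matrix.mulVec U ψ) μ = μ) :
    ∀ x y : Fin t → Fin d,
      (∫ ψ, tpow (rankOne ψ) t x y ∂μ)
        = (((d + t - 1).choose t : ℂ))⁻¹ * symProj (Fin d) t x y := by
  intro x y
  classical
  have hint : (fun ψ : Fin d → ℂ => tpow (rankOne ψ) t x y)
      = fun ψ => mono (cnt x) (cnt y) ψ := by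
    funext ψ
    show ∏ i, (ψ (x i) * (starRingEnd ℂ) (ψ (y i))) = _
    rw [Finset.prod_mul_distrib, prod_cnt x ψ, prod_cnt y (fun j => (starRingEnd ℂ) (ψ j)),
      mono, Finset.prod_mul_distrib]
  rw [show (∫ ψ, tpow (rankOne ψ) t x y ∂μ) = ∫ ψ, mono (cnt x) (cnt y) ψ ∂μ by rw [hint]]
  have hsym : symProj (Fin d) t x y
      = ((t.factorial : ℂ))⁻¹
          * ((Fintype.card {σ : Equiv.Perm (Fin t) // x ∘ σ = y} : ℕ) : ℂ) := by
    rw [symProj, Matrix.smul_apply, Matrix.sum_apply, smul_eq_mul]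
    congr 1
    calc (∑ σ : Equiv.Perm (Fin t), permOp (Fin d) σ x y)
        = ∑ σ : Equiv.Perm (Fin t), if x ∘ σ = y then (1 : ℂ) else 0 := by
          refine Finset.sum_congr rfl fun σ _ => ?_
          simp only [permOp, Matrix.of_apply, Function.comp_def]
      _ = ((univ.filter fun σ : Equiv.Perm (Fin t) => x ∘ σ = y).card : ℂ) := by
          rw [Finset.sum_boole]
      _ = ((Fintype.card {σ : Equiv.Perm (Fin t) // x ∘ σ = y} : ℕ) : ℂ) := by
          rw [Fintype.card_subtype]
  rcases eq_or_ne (cnt x) (cnt y) with hcc | hcc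
  · rw [← hcc]
    have hJ := g_val μ hsphere hinv t (cnt x) (sum_cnt x)
    rw [hsym, card_coset x y hcc]
    have hasc : d.ascFactorial t = t.factorial * (d + t - 1).choose t :=
      Nat.ascFactorial_eq_factorial_mul_choose' d t
    have hc0 : (((d + t - 1).choose t : ℕ) : ℂ) ≠ 0 := by
      exact_mod_cast (Nat.choose_pos (by omega : t ≤ d + t - 1)).ne'
    have ht0 : ((t.factorial : ℕ) : ℂ) ≠ 0 := by
      exact_mod_cast t.factorial_pos.ne'
    have hJ' : (∫ ψ, mono (cnt x) (cnt x) ψ ∂μ)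
        * (((t.factorial : ℕ) : ℂ) * (((d + t - 1).choose t : ℕ) : ℂ))
        = ((∏ j, (cnt x j).factorial : ℕ) : ℂ) := by
      push_cast
      push_cast [hasc] at hJ
      rw [← hJ]
    field_simp
    push_cast at hJ' ⊢
    linear_combination hJ'
  · have hne : ∃ j, cnt x j ≠ cnt y j := by
      by_contra h
      push_neg at h
      exact hcc (funext h)
    obtain ⟨j, hj⟩ := hne
    rw [phase_zero μ hinv _ _ j hj, hsym]
    have hcard0 : Fintype.card {σ : Equiv.Perm (Fin t) // x ∘ σ = y} = 0 := by
      rw [Fintype.card_eq_zero_iff]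
      refine ⟨fun ⟨σ, hσ⟩ => ?_⟩
      exact hcc (((cnt_comp x σ).symm).trans (congrArg cnt hσ))
    rw [hcard0]
    simp

end
end

section
/- Let d, t ≥ 1, let μ be the Haar probability measure on the unitary group U(d), and set γ(t,d) := ∫ |tr U|^{2t} dμ(U). For any finite list of unitaries U_1, …, U_K ∈ U(d), the t-th frame potential Φ_t := (1/K²)·Σ_{j,k=1}^{K} |tr(U_j U_k^†)|^{2t} satisfies Φ_t ≥ γ(t,d), with equality if and only if (1/K)·Σ_{j=1}^{K} U_j^{⊗t} ⊗ (U_j^{⊗t})^* = ∫ U^{⊗t} ⊗ (U^{⊗t})^* dμ(U), i.e. if and only if {U_j} is a unitary t-design. -/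
open scoped BigOperators

noncomputable section

open MeasureTheory

instance matrixMeasurableSpace (m n : Type*) [MeasurableSpace (m → n → ℂ)] :
    MeasurableSpace (Matrix m n ℂ) :=
  inferInstanceAs (MeasurableSpace (m → n → ℂ))

variable {d t : ℕ}

lemma meas_entry (i j : Fin d) : Measurable fun U : Matrix (Fin d) (Fin d) ℂ => U i j :=
  (measurable_pi_apply j).comp (measurable_pi_apply i)

lemma meas_prod (x y : Fin t → Fin d) :
    Measurable fun U : Matrix (Fin d) (Fin d) ℂ => ∏ i, U (x i) (y i) :=
  Finset.measurable_prod _ fun i _ => meas_entry (x i) (y i)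

lemma meas_conj {f : Matrix (Fin d) (Fin d) ℂ → ℂ} (hf : Measurable f) :
    Measurable fun U => (starRingEnd ℂ) (f U) := (continuous_star.measurable.comp hf : _)

lemma meas_trace : Measurable fun U : Matrix (Fin d) (Fin d) ℂ => Matrix.trace U :=
  Finset.measurable_sum _ fun i _ => meas_entry i i

lemma meas_abs_pow (n : ℕ) {f : Matrix (Fin d) (Fin d) ℂ → ℂ} (hf : Measurable f) :
    Measurable fun U => ‖f U‖ ^ n := by
  have : (fun U => ‖f U‖ ^ n) = fun U => ‖f U‖ ^ n := by
    rfl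
  rw [this]; exact hf.norm.pow_const n

lemma meas_mul_left (V : Matrix (Fin d) (Fin d) ℂ) :
    Measurable fun U : Matrix (Fin d) (Fin d) ℂ => V * U := by
  apply measurable_pi_lambda
  intro i; apply measurable_pi_lambda
  intro j
  simp only [Matrix.mul_apply]
  exact Finset.measurable_sum _ fun k _ => (meas_entry k j).const_mul (V i k)

lemma meas_mul_right (V : Matrix (Fin d) (Fin d) ℂ) :
    Measurable fun U : Matrix (Fin d) (Fin d) ℂ => U * V := by
  apply measurable_pi_lambda
  intro i; apply measurable_pi_lambda
  intro j
  simp only [Matrix.mul_apply]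
  exact Finset.measurable_sum _ fun k _ => (meas_entry i k).mul_const (V k j)

lemma entry_bound {U : Matrix (Fin d) (Fin d) ℂ}
    (hU : U ∈ Matrix.unitaryGroup (Fin d) ℂ) (i j : Fin d) : ‖U i j‖ ≤ 1 := by
  have h1 : star U * U = 1 := hU.1
  have h2 : (star U * U) j j = (1 : Matrix (Fin d) (Fin d) ℂ) j j := by rw [h1]
  rw [Matrix.mul_apply, Matrix.one_apply_eq] at h2
  have h3 : ∑ k, Complex.normSq (U k j) = 1 := by
    have := congrArg Complex.re h2
    simpa [Matrix.star_apply, Complex.mul_conj', Complex.normSq] using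
      (by
        have : ∑ k, (star U) j k * U k j = ∑ k, ((Complex.normSq (U k j) : ℝ) : ℂ) := by
          apply Finset.sum_congr rfl; intro k _
          rw [Matrix.star_apply, Complex.star_def, mul_comm, Complex.mul_conj]
        rw [this] at h2
        exact_mod_cast h2)
  have h4 : Complex.normSq (U i j) ≤ 1 := by
    rw [← h3]
    exact Finset.single_le_sum (f := fun k => Complex.normSq (U k j)) (fun k _ => Complex.normSq_nonneg _) (Finset.mem_univ i)
  have := Complex.sq_norm (U i j)
  nlinarith [norm_nonneg (U i j)]

lemma trace_bound {U : Matrix (Fin d) (Fin d) ℂ}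
    (hU : U ∈ Matrix.unitaryGroup (Fin d) ℂ) : ‖Matrix.trace U‖ ≤ d := by
  calc ‖Matrix.trace U‖ ≤ ∑ i, ‖U i i‖ := by
        rw [Matrix.trace]
        exact norm_sum_le _ _
      _ ≤ ∑ _i : Fin d, (1 : ℝ) := Finset.sum_le_sum fun i _ => entry_bound hU i i
      _ = d := by simp

abbrev Idx (d t : ℕ) := ((Fin t → Fin d) × (Fin t → Fin d)) × ((Fin t → Fin d) × (Fin t → Fin d))

def gE (d t : ℕ) (U : Matrix (Fin d) (Fin d) ℂ) (q : (Fin t → Fin d) × (Fin t → Fin d)) : ℂ :=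
  ∏ i, U (q.1 i) (q.2 i)

def fE (d t : ℕ) (U : Matrix (Fin d) (Fin d) ℂ) (p : Idx d t) : ℂ :=
  gE d t U p.1 * (starRingEnd ℂ) (gE d t U p.2)

lemma sum_fun_prod {β : Type*} [Fintype β] (h : β → ℂ) (t : ℕ) :
    ∑ g : Fin t → β, ∏ i, h (g i) = (∑ b, h b) ^ t := by
  rw [Finset.sum_pow' Finset.univ h t, Fintype.piFinset_univ]

lemma sum_gE (d t : ℕ) (A B : Matrix (Fin d) (Fin d) ℂ) :
    ∑ q : (Fin t → Fin d) × (Fin t → Fin d), gE d t A q * (starRingEnd ℂ) (gE d t B q)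
      = (Matrix.trace (A * B.conjTranspose)) ^ t := by
  have h : ∀ q : (Fin t → Fin d) × (Fin t → Fin d),
      gE d t A q * (starRingEnd ℂ) (gE d t B q)
        = ∏ i, (A (q.1 i) (q.2 i) * (starRingEnd ℂ) (B (q.1 i) (q.2 i))) := by
    intro q
    simp [gE, map_prod, Finset.prod_mul_distrib]
  rw [Finset.sum_congr rfl (fun q _ => h q)]
  rw [← Equiv.sum_comp (Equiv.arrowProdEquivProdArrow (Fin t) (fun _ => Fin d) (fun _ => Fin d))
    (fun q => ∏ i, (A (q.1 i) (q.2 i) * (starRingEnd ℂ) (B (q.1 i) (q.2 i))))]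
  simp only [Equiv.arrowProdEquivProdArrow, Equiv.coe_fn_mk]
  rw [sum_fun_prod (fun c : Fin d × Fin d => A c.1 c.2 * (starRingEnd ℂ) (B c.1 c.2)) t]
  congr 1
  rw [Matrix.trace]
  simp [Matrix.mul_apply, Matrix.conjTranspose_apply, Fintype.sum_prod_type, Matrix.diag]

lemma sum_fE (d t : ℕ) (A B : Matrix (Fin d) (Fin d) ℂ) :
    ∑ p : Idx d t, fE d t A p * (starRingEnd ℂ) (fE d t B p)
      = ((‖Matrix.trace (A * B.conjTranspose)‖ ^ (2 * t) : ℝ) : ℂ) := by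
  have : ∀ p : Idx d t, fE d t A p * (starRingEnd ℂ) (fE d t B p)
      = (gE d t A p.1 * (starRingEnd ℂ) (gE d t B p.1))
        * (starRingEnd ℂ) (gE d t A p.2 * (starRingEnd ℂ) (gE d t B p.2)) := by
    intro p; simp [fE]; ring
  rw [Finset.sum_congr rfl (fun p _ => this p), Fintype.sum_prod_type]
  have hfac : ∀ a : (Fin t → Fin d) × (Fin t → Fin d),
      ∑ b : (Fin t → Fin d) × (Fin t → Fin d),
        (gE d t A a * (starRingEnd ℂ) (gE d t B a))
          * (starRingEnd ℂ) (gE d t A b * (starRingEnd ℂ) (gE d t B b))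
      = (gE d t A a * (starRingEnd ℂ) (gE d t B a))
          * (starRingEnd ℂ) (∑ b : (Fin t → Fin d) × (Fin t → Fin d),
              gE d t A b * (starRingEnd ℂ) (gE d t B b)) := by
    intro a; rw [← Finset.mul_sum, map_sum]
  rw [Finset.sum_congr rfl (fun a _ => hfac a), ← Finset.sum_mul, sum_gE]
  set T := Matrix.trace (A * B.conjTranspose)
  rw [Complex.mul_conj]
  norm_cast
  rw [← Complex.sq_norm, norm_pow, ← pow_mul, mul_comm]

variable {d t : ℕ}

lemma meas_fE (p : Idx d t) : Measurable fun U : Matrix (Fin d) (Fin d) ℂ => fE d t U p :=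
  (meas_prod p.1.1 p.1.2).mul (meas_conj (meas_prod p.2.1 p.2.2))

lemma conj_fE (U : Matrix (Fin d) (Fin d) ℂ) (p : Idx d t) :
    (starRingEnd ℂ) (fE d t U p) = fE d t U (p.2, p.1) := by
  simp only [fE]; rw [map_mul, Complex.conj_conj]; ring

lemma norm_fE_le {U : Matrix (Fin d) (Fin d) ℂ}
    (hU : U ∈ Matrix.unitaryGroup (Fin d) ℂ) (p : Idx d t) : ‖fE d t U p‖ ≤ 1 := by
  have hg : ∀ q : (Fin t → Fin d) × (Fin t → Fin d), ‖gE d t U q‖ ≤ 1 := by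
    intro q
    rw [gE]
    calc ‖∏ i, U (q.1 i) (q.2 i)‖ = ∏ i, ‖U (q.1 i) (q.2 i)‖ := by
          rw [norm_prod]
      _ ≤ 1 := Finset.prod_le_one (fun i _ => norm_nonneg _)
          (fun i _ => by exact entry_bound hU _ _)
  calc ‖fE d t U p‖ = ‖gE d t U p.1‖ * ‖gE d t U p.2‖ := by
        rw [fE, norm_mul, RCLike.norm_conj]
      _ ≤ 1 * 1 := mul_le_mul (hg p.1) (hg p.2) (norm_nonneg _) zero_le_one
      _ = 1 := mul_one 1

variable {μ : Measure (Matrix (Fin d) (Fin d) ℂ)} [IsProbabilityMeasure μ]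

lemma integrable_fE (hsupp : ∀ᵐ U ∂μ, U ∈ Matrix.unitaryGroup (Fin d) ℂ) (p : Idx d t) :
    Integrable (fun U => fE d t U p) μ := by
  apply Integrable.mono' (integrable_const (1 : ℝ)) (meas_fE p).aestronglyMeasurable
  filter_upwards [hsupp] with U hu
  exact norm_fE_le hu p

lemma integrable_absTracePow (hsupp : ∀ᵐ U ∂μ, U ∈ Matrix.unitaryGroup (Fin d) ℂ) (n : ℕ) :
    Integrable (fun U => ‖Matrix.trace U‖ ^ n) μ := by
  apply Integrable.mono' (integrable_const ((d : ℝ) ^ n)) (meas_abs_pow n meas_trace).aestronglyMeasurable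
  filter_upwards [hsupp] with U hu
  rw [Real.norm_eq_abs, abs_of_nonneg (by positivity)]
  exact pow_le_pow_left₀ (norm_nonneg _) (trace_bound hu) n

lemma meas_conjT : Measurable fun U : Matrix (Fin d) (Fin d) ℂ => U.conjTranspose := by
  apply measurable_pi_lambda
  intro i; apply measurable_pi_lambda
  intro j
  exact (continuous_star.measurable.comp (meas_entry j i) : _)

/-- Left-invariance gives `∫ |tr(W U†)|^{2t} dμ(U) = ∫ |tr U|^{2t} dμ` for unitary `W`. -/
lemma int_inv (hleft : ∀ V ∈ Matrix.unitaryGroup (Fin d) ℂ,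
      Measure.map (fun U => V * U) μ = μ)
    {W : Matrix (Fin d) (Fin d) ℂ} (hW : W ∈ Matrix.unitaryGroup (Fin d) ℂ) (n : ℕ) :
    ∫ U, ‖Matrix.trace (W * U.conjTranspose)‖ ^ n ∂μ
      = ∫ U, ‖Matrix.trace U‖ ^ n ∂μ := by
  have hgm : Measurable fun U : Matrix (Fin d) (Fin d) ℂ =>
      ‖Matrix.trace (W * U.conjTranspose)‖ ^ n :=
    meas_abs_pow n (meas_trace.comp ((meas_mul_left W).comp meas_conjT))
  conv_lhs => rw [← hleft W hW]
  rw [integral_map (meas_mul_left W).aemeasurable hgm.aestronglyMeasurable]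
  apply integral_congr_ae
  apply Filter.Eventually.of_forall
  intro U
  have htr : Matrix.trace (W * (W * U).conjTranspose) = starRingEnd ℂ (Matrix.trace U) := by
    rw [Matrix.conjTranspose_mul, ← mul_assoc, Matrix.trace_mul_comm, ← mul_assoc]
    have h1 : W.conjTranspose * W = 1 := hW.1
    rw [h1, one_mul, Matrix.trace_conjTranspose]
    rfl
  simp only [htr, Complex.norm_conj]


/-- For the Haar probability measure `μ` on `U(d)` and
`γ(t,d) = ∫ |tr U|^{2t} dμ(U)`, the `t`-th frame potential of any finite list of unitaries
`U_1, …, U_K` satisfies `Φ_t ≥ γ(t,d)`, with equality iff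
`(1/K)·Σ_j U_j^{⊗t} ⊗ (U_j^{⊗t})^* = ∫ U^{⊗t} ⊗ (U^{⊗t})^* dμ(U)` (entrywise),
i.e. iff `{U_j}` is a unitary `t`-design. -/
theorem stmt2 (d t K : ℕ) (hd : 1 ≤ d) (ht : 1 ≤ t) (hK : 1 ≤ K)
    (μ : Measure (Matrix (Fin d) (Fin d) ℂ)) [IsProbabilityMeasure μ]
    (hsupp : ∀ᵐ U ∂μ, U ∈ Matrix.unitaryGroup (Fin d) ℂ)
    (hleft : ∀ V ∈ Matrix.unitaryGroup (Fin d) ℂ,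
      Measure.map (fun U => V * U) μ = μ)
    (hright : ∀ V ∈ Matrix.unitaryGroup (Fin d) ℂ,
      Measure.map (fun U => U * V) μ = μ)
    (Us : Fin K → Matrix (Fin d) (Fin d) ℂ)
    (hU : ∀ j, Us j ∈ Matrix.unitaryGroup (Fin d) ℂ) :
    (∫ U, ‖Matrix.trace U‖ ^ (2 * t) ∂μ) ≤
      (1 / (K : ℝ) ^ 2) * ∑ j, ∑ k,
        ‖Matrix.trace (Us j * (Us k).conjTranspose)‖ ^ (2 * t) ∧
    ((1 / (K : ℝ) ^ 2) * ∑ j, ∑ k,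
        ‖Matrix.trace (Us j * (Us k).conjTranspose)‖ ^ (2 * t)
        = ∫ U, ‖Matrix.trace U‖ ^ (2 * t) ∂μ ↔
      ∀ x y x' y' : Fin t → Fin d,
        (K : ℂ)⁻¹ * ∑ j, ((∏ i, Us j (x i) (y i)) *
            (starRingEnd ℂ) (∏ i, Us j (x' i) (y' i)))
          = ∫ U, ((∏ i, U (x i) (y i)) *
              (starRingEnd ℂ) (∏ i, U (x' i) (y' i))) ∂μ) := by
  classical
  have hKc : (K : ℂ) ≠ 0 := Nat.cast_ne_zero.mpr (by omega)
  set γ : ℝ := ∫ U, ‖Matrix.trace U‖ ^ (2 * t) ∂μ with hγ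
  set Φ : ℝ := (1 / (K : ℝ) ^ 2) * ∑ j, ∑ k,
      ‖Matrix.trace (Us j * (Us k).conjTranspose)‖ ^ (2 * t) with hΦ
  set w : Idx d t → ℂ := fun p => (K : ℂ)⁻¹ * ∑ j, fE d t (Us j) p with hw
  set m : Idx d t → ℂ := fun p => ∫ U, fE d t U p ∂μ with hm
  have hint : ∀ p : Idx d t, Integrable (fun U => fE d t U p) μ := integrable_fE hsupp
  have hintc : ∀ (c : ℂ) (p : Idx d t),
      Integrable (fun U => c * (starRingEnd ℂ) (fE d t U p)) μ := by
    intro c p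
    have h : (fun U : Matrix (Fin d) (Fin d) ℂ => c * (starRingEnd ℂ) (fE d t U p))
        = fun U => c * fE d t U (p.2, p.1) := by
      funext U; rw [conj_fE]
    rw [h]
    exact (hint (p.2, p.1)).const_mul c
  -- key integral identity per unitary A
  have hSj : ∀ A : Matrix (Fin d) (Fin d) ℂ, A ∈ Matrix.unitaryGroup (Fin d) ℂ →
      ∑ p : Idx d t, fE d t A p * (starRingEnd ℂ) (m p) = (γ : ℂ) := by
    intro A hA
    have step1 : ∀ p : Idx d t, fE d t A p * (starRingEnd ℂ) (m p)
        = ∫ U, fE d t A p * (starRingEnd ℂ) (fE d t U p) ∂μ := by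
      intro p
      simp only [hm]
      rw [← integral_conj, ← integral_const_mul]
    rw [Finset.sum_congr rfl (fun p _ => step1 p),
      ← integral_finset_sum _ (fun p _ => hintc (fE d t A p) p)]
    rw [integral_congr_ae (Filter.Eventually.of_forall (fun U => sum_fE d t A U)), hγ,
      ← int_inv hleft hA (2 * t)]
    exact integral_ofReal
  have S2 : ∑ p : Idx d t, w p * (starRingEnd ℂ) (m p) = (γ : ℂ) := by
    have step : ∀ p : Idx d t, w p * (starRingEnd ℂ) (m p)
        = (K : ℂ)⁻¹ * ∑ j, fE d t (Us j) p * (starRingEnd ℂ) (m p) := by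
      intro p
      simp only [hw]
      rw [mul_assoc, Finset.sum_mul]
    rw [Finset.sum_congr rfl (fun p _ => step p), ← Finset.mul_sum, Finset.sum_comm]
    rw [Finset.sum_congr rfl (fun j (_ : j ∈ Finset.univ) => hSj (Us j) (hU j))]
    rw [Finset.sum_const, Finset.card_univ, Fintype.card_fin, nsmul_eq_mul]
    rw [← mul_assoc, inv_mul_cancel₀ hKc, one_mul]
  have S3 : ∑ p : Idx d t, m p * (starRingEnd ℂ) (w p) = (γ : ℂ) := by
    have step : ∀ p : Idx d t, m p * (starRingEnd ℂ) (w p)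
        = (starRingEnd ℂ) (w p * (starRingEnd ℂ) (m p)) := by
      intro p
      rw [map_mul (starRingEnd ℂ) (w p) ((starRingEnd ℂ) (m p)), Complex.conj_conj]
      ring
    rw [Finset.sum_congr rfl (fun p _ => step p), ← map_sum, S2, Complex.conj_ofReal]
  have S1 : ∑ p : Idx d t, w p * (starRingEnd ℂ) (w p) = (Φ : ℂ) := by
    have hconjw : ∀ p : Idx d t, (starRingEnd ℂ) (w p)
        = (K : ℂ)⁻¹ * ∑ k, (starRingEnd ℂ) (fE d t (Us k) p) := by
      intro p
      simp only [hw]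
      rw [map_mul, map_sum, map_inv₀, Complex.conj_natCast]
    have step : ∀ p : Idx d t, w p * (starRingEnd ℂ) (w p)
        = ((K : ℂ)⁻¹ * (K : ℂ)⁻¹) * ∑ j, ∑ k,
            fE d t (Us j) p * (starRingEnd ℂ) (fE d t (Us k) p) := by
      intro p
      rw [hconjw p]
      simp only [hw]
      rw [mul_mul_mul_comm, Finset.sum_mul_sum]
    rw [Finset.sum_congr rfl (fun p _ => step p), ← Finset.mul_sum]
    rw [Finset.sum_comm]
    have swap2 : ∀ j : Fin K, ∑ p : Idx d t, ∑ k : Fin K,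
        fE d t (Us j) p * (starRingEnd ℂ) (fE d t (Us k) p)
          = ∑ k : Fin K, ((‖Matrix.trace (Us j * (Us k).conjTranspose)‖
              ^ (2 * t) : ℝ) : ℂ) := by
      intro j
      rw [Finset.sum_comm]
      exact Finset.sum_congr rfl fun k _ => sum_fE d t (Us j) (Us k)
    rw [Finset.sum_congr rfl (fun j (_ : j ∈ (Finset.univ : Finset (Fin K))) => swap2 j), hΦ]
    push_cast
    congr 1
    rw [one_div, sq, mul_inv]
  have S4 : ∑ p : Idx d t, m p * (starRingEnd ℂ) (m p) = (γ : ℂ) := by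
    have step1 : ∀ p : Idx d t, m p * (starRingEnd ℂ) (m p)
        = ∫ V, m p * (starRingEnd ℂ) (fE d t V p) ∂μ := by
      intro p
      have h1 : (starRingEnd ℂ) (m p) = ∫ V, (starRingEnd ℂ) (fE d t V p) ∂μ := by
        simp only [hm]; rw [integral_conj]
      rw [h1, ← integral_const_mul]
    rw [Finset.sum_congr rfl (fun p _ => step1 p),
      ← integral_finset_sum _ (fun p _ => hintc (m p) p)]
    have inner : ∀ V, V ∈ Matrix.unitaryGroup (Fin d) ℂ →
        ∑ p : Idx d t, m p * (starRingEnd ℂ) (fE d t V p) = (γ : ℂ) := by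
      intro V hV
      have e1 : ∀ p : Idx d t, m p * (starRingEnd ℂ) (fE d t V p)
          = ∫ U, fE d t U p * (starRingEnd ℂ) (fE d t V p) ∂μ := by
        intro p
        simp only [hm]
        rw [← integral_mul_const]
      rw [Finset.sum_congr rfl (fun p _ => e1 p),
        ← integral_finset_sum _ (fun p _ => (hint p).mul_const ((starRingEnd ℂ) (fE d t V p)))]
      rw [integral_congr_ae (Filter.Eventually.of_forall (fun U => sum_fE d t U V))]
      have habs : ∀ U : Matrix (Fin d) (Fin d) ℂ,
          ‖Matrix.trace (U * V.conjTranspose)‖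
            = ‖Matrix.trace (V * U.conjTranspose)‖ := by
        intro U
        have h2 : Matrix.trace (V * U.conjTranspose)
            = (starRingEnd ℂ) (Matrix.trace (U * V.conjTranspose)) := by
          have h5 : (U * V.conjTranspose).conjTranspose = V * U.conjTranspose := by
            rw [Matrix.conjTranspose_mul, Matrix.conjTranspose_conjTranspose]
          rw [← h5, Matrix.trace_conjTranspose]
          rfl
        rw [h2, Complex.norm_conj]
      have e2 : (fun U : Matrix (Fin d) (Fin d) ℂ =>
            ((‖Matrix.trace (U * V.conjTranspose)‖ ^ (2 * t) : ℝ) : ℂ))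
          = fun U => ((‖Matrix.trace (V * U.conjTranspose)‖ ^ (2 * t) : ℝ) : ℂ) := by
        funext U; rw [habs U]
      rw [e2, hγ, ← int_inv hleft hV (2 * t)]
      exact integral_ofReal
    rw [integral_congr_ae (hsupp.mono inner)]
    simp
  -- assembling
  have hcast : ((∑ p : Idx d t, Complex.normSq (w p - m p) : ℝ) : ℂ)
      = ∑ p : Idx d t, ((Complex.normSq (w p - m p) : ℝ) : ℂ) := by
    push_cast
    rfl
  have expand : ∀ p : Idx d t, ((Complex.normSq (w p - m p) : ℝ) : ℂ)
      = w p * (starRingEnd ℂ) (w p) - w p * (starRingEnd ℂ) (m p)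
        - m p * (starRingEnd ℂ) (w p) + m p * (starRingEnd ℂ) (m p) := by
    intro p
    rw [← Complex.mul_conj, map_sub]
    ring
  have key : (Φ : ℂ) - (γ : ℂ) = ((∑ p : Idx d t, Complex.normSq (w p - m p) : ℝ) : ℂ) := by
    rw [hcast, Finset.sum_congr rfl (fun p _ => expand p)]
    simp only [Finset.sum_add_distrib, Finset.sum_sub_distrib]
    rw [S1, S2, S3, S4]
    ring
  have keyR : Φ - γ = ∑ p : Idx d t, Complex.normSq (w p - m p) := by
    exact_mod_cast key
  have hN : 0 ≤ ∑ p : Idx d t, Complex.normSq (w p - m p) :=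
    Finset.sum_nonneg fun p _ => Complex.normSq_nonneg _
  have hwm : ∀ x y x' y' : Fin t → Fin d,
      (w ((x, y), (x', y')) = m ((x, y), (x', y'))) ↔
      ((K : ℂ)⁻¹ * ∑ j, ((∏ i, Us j (x i) (y i)) *
            (starRingEnd ℂ) (∏ i, Us j (x' i) (y' i)))
          = ∫ U, ((∏ i, U (x i) (y i)) *
              (starRingEnd ℂ) (∏ i, U (x' i) (y' i))) ∂μ) := by
    intro x y x' y'
    simp only [hw, hm, fE, gE]
  constructor
  · linarith
  · constructor
    · intro heq
      have hz : ∑ p : Idx d t, Complex.normSq (w p - m p) = 0 := by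
        rw [← keyR, heq]; ring
      have hz2 := (Finset.sum_eq_zero_iff_of_nonneg
        (fun p _ => Complex.normSq_nonneg (w p - m p))).mp hz
      intro x y x' y'
      have h3 := hz2 ((x, y), (x', y')) (Finset.mem_univ _)
      have h4 : w ((x, y), (x', y')) - m ((x, y), (x', y')) = 0 :=
        Complex.normSq_eq_zero.mp h3
      exact (hwm x y x' y').mp (sub_eq_zero.mp h4)
    · intro hdes
      have hz : ∀ p : Idx d t, w p = m p := by
        rintro ⟨⟨x, y⟩, ⟨x', y'⟩⟩
        exact (hwm x y x' y').mpr (hdes x y x' y')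
      have : ∑ p : Idx d t, Complex.normSq (w p - m p) = 0 :=
        Finset.sum_eq_zero fun p _ => by rw [hz p, sub_self]; simp
      linarith

end
end

section
/- Let n ≥ 1 and d = 2^n. Then tr(P_{n,4} · P_sym) = (d+1)(d+2)/6 and tr(P_{n,4} · P_asym) = (d−1)(d−2)/6, where P_sym := (1/24)·Σ_{σ∈S_4} U_σ is the symmetrizer and P_asym := (1/24)·Σ_{σ∈S_4} sgn(σ)·U_σ is the antisymmetrizer on (ℂ^d)^{⊗4}. (These are the dimensions D_[4]^+ and D_[1,1,1,1]^+ of the intersections of the stabilizer code V_{n,4} with the totally symmetric and totally antisymmetric subspaces.) -/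
open scoped BigOperators

noncomputable section

/-- Single-qubit Pauli matrices labelled by `𝔽₂²`:
`σ_{(0,0)} = I`, `σ_{(0,1)} = X`, `σ_{(1,0)} = Z`, `σ_{(1,1)} = Y`. -/
def pauli (a : ZMod 2 × ZMod 2) : Matrix (ZMod 2) (ZMod 2) ℂ :=
  Matrix.of fun x y =>
    if a = (0, 0) then (if x = y then 1 else 0)
    else if a = (0, 1) then (if x = y + 1 then 1 else 0)
    else if a = (1, 0) then (if x = y then (if x = 0 then 1 else -1) else 0)
    else (if x = y + 1 then (if x = 0 then -Complex.I else Complex.I) else 0)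

/-- The Pauli operator `W_a`, `a ∈ 𝔽₂^{2n}`, on qubits labelled by a finite type `Q`. -/
def PauliW {Q : Type*} [Fintype Q] (a : Q → ZMod 2 × ZMod 2) :
    Matrix (Q → ZMod 2) (Q → ZMod 2) ℂ :=
  Matrix.of fun x y => ∏ i, pauli (a i) (x i) (y i)

/-- The stabilizer projector `P_{n,k} = 2^{-2n}·Σ_{a∈𝔽₂^{2n}} W_a^{⊗k}`. -/
def stabProj (n k : ℕ) :
    Matrix (Fin k → (Fin n → ZMod 2)) (Fin k → (Fin n → ZMod 2)) ℂ :=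
  ((2 : ℂ) ^ (2 * n))⁻¹ • ∑ a : Fin n → ZMod 2 × ZMod 2, tpow (PauliW a) k

/-- A single-qubit gate `G` applied to qubit `i` of `n` qubits (identity elsewhere). -/
def embedGate (n : ℕ) (G : Matrix (ZMod 2) (ZMod 2) ℂ) (i : Fin n) :
    Matrix (Fin n → ZMod 2) (Fin n → ZMod 2) ℂ :=
  Matrix.of fun x y =>
    G (x i) (y i) * ∏ k ∈ Finset.univ.erase i, (if x k = y k then (1 : ℂ) else 0)

/-- The Hadamard gate `((1+i)/2)·[[1,1],[1,−1]]`. -/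
def hGate : Matrix (ZMod 2) (ZMod 2) ℂ :=
  Matrix.of fun x y => (1 + Complex.I) / 2 * (if x = 1 ∧ y = 1 then -1 else 1)

/-- The phase gate `diag(1, −i)`. -/
def sGate : Matrix (ZMod 2) (ZMod 2) ℂ :=
  Matrix.of fun x y => if x = y then (if x = 0 then 1 else -Complex.I) else 0

/-- The CNOT gate with control qubit `i` and target qubit `j`. -/
def cnotGate (n : ℕ) (i j : Fin n) :
    Matrix (Fin n → ZMod 2) (Fin n → ZMod 2) ℂ :=
  Matrix.of fun x y =>
    if x i = y i ∧ x j = y i + y j ∧ ∀ k, k ≠ i → k ≠ j → x k = y k then 1 else 0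

/-- Generators of the `n`-qubit Clifford group: Hadamard and phase gates on each qubit,
CNOT gates on each ordered pair of distinct qubits. -/
def cliffordGens (n : ℕ) : Set (Matrix (Fin n → ZMod 2) (Fin n → ZMod 2) ℂ) :=
  (⋃ i : Fin n, {embedGate n hGate i}) ∪ (⋃ i : Fin n, {embedGate n sGate i}) ∪
    ⋃ (i : Fin n) (j : Fin n) (_ : i ≠ j), {cnotGate n i j}

/-- The `n`-qubit Clifford group: the subgroup of the unitary group `U(2^n)` generated by
the Hadamard and phase gates on each qubit together with the CNOT gates. -/
def CliffordGroup (n : ℕ) : Subgroup (Matrix.unitaryGroup (Fin n → ZMod 2) ℂ) :=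
  Subgroup.closure
    {U : Matrix.unitaryGroup (Fin n → ZMod 2) ℂ |
      (U : Matrix (Fin n → ZMod 2) (Fin n → ZMod 2) ℂ) ∈ cliffordGens n}

/-- The antisymmetrizer `(1/t!)·Σ_σ sgn(σ)·U_σ` on `(ℂ^α)^{⊗t}`. -/
def antisymProj (α : Type*) [DecidableEq α] (t : ℕ) :
    Matrix (Fin t → α) (Fin t → α) ℂ :=
  (t.factorial : ℂ)⁻¹ •
    ∑ σ : Equiv.Perm (Fin t), ((Equiv.Perm.sign σ : ℤ) : ℂ) • permOp α σ


-- ===== auxiliary lemmas for stmt6 =====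

lemma traceA {α : Type*} [Fintype α] [DecidableEq α] (M : Matrix α α ℂ) (t : ℕ)
    (σ : Equiv.Perm (Fin t)) :
    Matrix.trace (tpow M t * permOp α σ) = ∑ y : Fin t → α, ∏ i, M (y (σ i)) (y i) := by
  simp only [Matrix.trace, Matrix.diag, Matrix.mul_apply, tpow, permOp, Matrix.of_apply]
  rw [Finset.sum_comm]
  refine Finset.sum_congr rfl fun y _ => ?_
  rw [Finset.sum_eq_single (fun k => y (σ k))]
  · simp
  · intro b _ hb
    simp only [mul_ite, mul_one, mul_zero, ite_eq_right_iff]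
    exact fun h => absurd h (Ne.symm hb)
  · simp

def cval (σ : Equiv.Perm (Fin 4)) : ℂ :=
  ∑ u : (ZMod 2 × ZMod 2) × (Fin 4 → ZMod 2), ∏ i, pauli u.1 (u.2 (σ i)) (u.2 i)

lemma factorB (n : ℕ) (σ : Equiv.Perm (Fin 4)) :
    ∑ a : Fin n → ZMod 2 × ZMod 2, ∑ y : Fin 4 → (Fin n → ZMod 2),
      ∏ i, PauliW a (y (σ i)) (y i) = (cval σ) ^ n := by
  have h1 : ∀ (a : Fin n → ZMod 2 × ZMod 2) (y : Fin 4 → Fin n → ZMod 2),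
      ∏ i, PauliW a (y (σ i)) (y i) = ∏ q, ∏ i, pauli (a q) (y (σ i) q) (y i q) := by
    intro a y
    simp only [PauliW, Matrix.of_apply]
    exact Finset.prod_comm
  simp only [h1]
  have h2 : ∀ a : Fin n → ZMod 2 × ZMod 2,
      ∑ y : Fin 4 → (Fin n → ZMod 2), ∏ q, ∏ i, pauli (a q) (y (σ i) q) (y i q)
      = ∑ w : Fin n → (Fin 4 → ZMod 2), ∏ q, ∏ i, pauli (a q) (w q (σ i)) (w q i) := by
    intro a
    exact (Equiv.sum_comp (Equiv.piComm fun (_ : Fin n) (_ : Fin 4) => ZMod 2)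
      (fun y => ∏ q, ∏ i, pauli (a q) (y (σ i) q) (y i q))).symm
  simp only [h2]
  have h3 : (cval σ) ^ n = ∏ _q : Fin n, cval σ := by
    rw [Finset.prod_const, Finset.card_univ, Fintype.card_fin]
  rw [h3]
  unfold cval
  rw [Fintype.prod_sum (fun (_ : Fin n) (u : (ZMod 2 × ZMod 2) × (Fin 4 → ZMod 2)) =>
    ∏ i, pauli u.1 (u.2 (σ i)) (u.2 i))]
  rw [← Equiv.sum_comp
    (Equiv.arrowProdEquivProdArrow (Fin n) (fun _ => ZMod 2 × ZMod 2) (fun _ => Fin 4 → ZMod 2)).symm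
    (fun x : Fin n → (ZMod 2 × ZMod 2) × (Fin 4 → ZMod 2) =>
      ∏ q, ∏ i, pauli (x q).1 ((x q).2 (σ i)) ((x q).2 i))]
  rw [Fintype.sum_prod_type]
  rfl

def e4 : (ZMod 2 × ZMod 2 × ZMod 2 × ZMod 2) ≃ (Fin 4 → ZMod 2) where
  toFun p := ![p.1, p.2.1, p.2.2.1, p.2.2.2]
  invFun f := (f 0, f 1, f 2, f 3)
  left_inv := by decide
  right_inv := by decide

lemma sum_zmod2 (f : ZMod 2 → ℂ) : ∑ x, f x = f 0 + f 1 := Fin.sum_univ_two f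

lemma cval_eq (σ : Equiv.Perm (Fin 4)) :
    cval σ = ∑ b : ZMod 2 × ZMod 2, ∑ z0 : ZMod 2, ∑ z1 : ZMod 2, ∑ z2 : ZMod 2, ∑ z3 : ZMod 2,
      ∏ i, pauli b (![z0, z1, z2, z3] (σ i)) (![z0, z1, z2, z3] i) := by
  unfold cval
  rw [Fintype.sum_prod_type]
  refine Finset.sum_congr rfl fun b _ => ?_
  rw [← Equiv.sum_comp e4 (fun z => ∏ i, pauli b (z (σ i)) (z i))]
  simp only [Fintype.sum_prod_type]
  rfl


def p0 : Equiv.Perm (Fin 4) := ⟨![0,1,2,3], ![0,1,2,3], by decide, by decide⟩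

def p1 : Equiv.Perm (Fin 4) := ⟨![0,1,3,2], ![0,1,3,2], by decide, by decide⟩

def p2 : Equiv.Perm (Fin 4) := ⟨![0,2,1,3], ![0,2,1,3], by decide, by decide⟩

def p3 : Equiv.Perm (Fin 4) := ⟨![0,2,3,1], ![0,3,1,2], by decide, by decide⟩

def p4 : Equiv.Perm (Fin 4) := ⟨![0,3,1,2], ![0,2,3,1], by decide, by decide⟩

def p5 : Equiv.Perm (Fin 4) := ⟨![0,3,2,1], ![0,3,2,1], by decide, by decide⟩

def p6 : Equiv.Perm (Fin 4) := ⟨![1,0,2,3], ![1,0,2,3], by decide, by decide⟩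

def p7 : Equiv.Perm (Fin 4) := ⟨![1,0,3,2], ![1,0,3,2], by decide, by decide⟩

def p8 : Equiv.Perm (Fin 4) := ⟨![1,2,0,3], ![2,0,1,3], by decide, by decide⟩

def p9 : Equiv.Perm (Fin 4) := ⟨![1,2,3,0], ![3,0,1,2], by decide, by decide⟩

def p10 : Equiv.Perm (Fin 4) := ⟨![1,3,0,2], ![2,0,3,1], by decide, by decide⟩

def p11 : Equiv.Perm (Fin 4) := ⟨![1,3,2,0], ![3,0,2,1], by decide, by decide⟩

def p12 : Equiv.Perm (Fin 4) := ⟨![2,0,1,3], ![1,2,0,3], by decide, by decide⟩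

def p13 : Equiv.Perm (Fin 4) := ⟨![2,0,3,1], ![1,3,0,2], by decide, by decide⟩

def p14 : Equiv.Perm (Fin 4) := ⟨![2,1,0,3], ![2,1,0,3], by decide, by decide⟩

def p15 : Equiv.Perm (Fin 4) := ⟨![2,1,3,0], ![3,1,0,2], by decide, by decide⟩

def p16 : Equiv.Perm (Fin 4) := ⟨![2,3,0,1], ![2,3,0,1], by decide, by decide⟩

def p17 : Equiv.Perm (Fin 4) := ⟨![2,3,1,0], ![3,2,0,1], by decide, by decide⟩

def p18 : Equiv.Perm (Fin 4) := ⟨![3,0,1,2], ![1,2,3,0], by decide, by decide⟩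

def p19 : Equiv.Perm (Fin 4) := ⟨![3,0,2,1], ![1,3,2,0], by decide, by decide⟩

def p20 : Equiv.Perm (Fin 4) := ⟨![3,1,0,2], ![2,1,3,0], by decide, by decide⟩

def p21 : Equiv.Perm (Fin 4) := ⟨![3,1,2,0], ![3,1,2,0], by decide, by decide⟩

def p22 : Equiv.Perm (Fin 4) := ⟨![3,2,0,1], ![2,3,1,0], by decide, by decide⟩

def p23 : Equiv.Perm (Fin 4) := ⟨![3,2,1,0], ![3,2,1,0], by decide, by decide⟩

lemma cv0 : cval p0 = 16 := by
  rw [cval_eq]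
  simp (config := { decide := true }) only [Fintype.sum_prod_type, sum_zmod2, p0,
    Equiv.coe_fn_mk, Fin.prod_univ_four,
    Matrix.cons_val_zero, Matrix.cons_val_one, Matrix.head_cons, Matrix.cons_val_two,
    Matrix.cons_val_three, Matrix.vecHead, Matrix.vecTail, Function.comp, pauli,
    Matrix.of_apply, if_true, if_false]
  try ring_nf
  all_goals try simp [Complex.I_sq]
  all_goals try norm_num

lemma cv1 : cval p1 = 8 := by
  rw [cval_eq]
  simp (config := { decide := true }) only [Fintype.sum_prod_type, sum_zmod2, p1,
    Equiv.coe_fn_mk, Fin.prod_univ_four,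
    Matrix.cons_val_zero, Matrix.cons_val_one, Matrix.head_cons, Matrix.cons_val_two,
    Matrix.cons_val_three, Matrix.vecHead, Matrix.vecTail, Function.comp, pauli,
    Matrix.of_apply, if_true, if_false]
  try ring_nf
  all_goals try simp [Complex.I_sq]
  all_goals try norm_num

lemma cv2 : cval p2 = 8 := by
  rw [cval_eq]
  simp (config := { decide := true }) only [Fintype.sum_prod_type, sum_zmod2, p2,
    Equiv.coe_fn_mk, Fin.prod_univ_four,
    Matrix.cons_val_zero, Matrix.cons_val_one, Matrix.head_cons, Matrix.cons_val_two,
    Matrix.cons_val_three, Matrix.vecHead, Matrix.vecTail, Function.comp, pauli,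
    Matrix.of_apply, if_true, if_false]
  try ring_nf
  all_goals try simp [Complex.I_sq]
  all_goals try norm_num

lemma cv3 : cval p3 = 4 := by
  rw [cval_eq]
  simp (config := { decide := true }) only [Fintype.sum_prod_type, sum_zmod2, p3,
    Equiv.coe_fn_mk, Fin.prod_univ_four,
    Matrix.cons_val_zero, Matrix.cons_val_one, Matrix.head_cons, Matrix.cons_val_two,
    Matrix.cons_val_three, Matrix.vecHead, Matrix.vecTail, Function.comp, pauli,
    Matrix.of_apply, if_true, if_false]
  try ring_nf
  all_goals try simp [Complex.I_sq]
  all_goals try norm_num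

lemma cv4 : cval p4 = 4 := by
  rw [cval_eq]
  simp (config := { decide := true }) only [Fintype.sum_prod_type, sum_zmod2, p4,
    Equiv.coe_fn_mk, Fin.prod_univ_four,
    Matrix.cons_val_zero, Matrix.cons_val_one, Matrix.head_cons, Matrix.cons_val_two,
    Matrix.cons_val_three, Matrix.vecHead, Matrix.vecTail, Function.comp, pauli,
    Matrix.of_apply, if_true, if_false]
  try ring_nf
  all_goals try simp [Complex.I_sq]
  all_goals try norm_num

lemma cv5 : cval p5 = 8 := by
  rw [cval_eq]
  simp (config := { decide := true }) only [Fintype.sum_prod_type, sum_zmod2, p5,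
    Equiv.coe_fn_mk, Fin.prod_univ_four,
    Matrix.cons_val_zero, Matrix.cons_val_one, Matrix.head_cons, Matrix.cons_val_two,
    Matrix.cons_val_three, Matrix.vecHead, Matrix.vecTail, Function.comp, pauli,
    Matrix.of_apply, if_true, if_false]
  try ring_nf
  all_goals try simp [Complex.I_sq]
  all_goals try norm_num

lemma cv6 : cval p6 = 8 := by
  rw [cval_eq]
  simp (config := { decide := true }) only [Fintype.sum_prod_type, sum_zmod2, p6,
    Equiv.coe_fn_mk, Fin.prod_univ_four,
    Matrix.cons_val_zero, Matrix.cons_val_one, Matrix.head_cons, Matrix.cons_val_two,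
    Matrix.cons_val_three, Matrix.vecHead, Matrix.vecTail, Function.comp, pauli,
    Matrix.of_apply, if_true, if_false]
  try ring_nf
  all_goals try simp [Complex.I_sq]
  all_goals try norm_num

lemma cv7 : cval p7 = 16 := by
  rw [cval_eq]
  simp (config := { decide := true }) only [Fintype.sum_prod_type, sum_zmod2, p7,
    Equiv.coe_fn_mk, Fin.prod_univ_four,
    Matrix.cons_val_zero, Matrix.cons_val_one, Matrix.head_cons, Matrix.cons_val_two,
    Matrix.cons_val_three, Matrix.vecHead, Matrix.vecTail, Function.comp, pauli,
    Matrix.of_apply, if_true, if_false]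
  try ring_nf
  all_goals try simp [Complex.I_sq]
  all_goals try norm_num

lemma cv8 : cval p8 = 4 := by
  rw [cval_eq]
  simp (config := { decide := true }) only [Fintype.sum_prod_type, sum_zmod2, p8,
    Equiv.coe_fn_mk, Fin.prod_univ_four,
    Matrix.cons_val_zero, Matrix.cons_val_one, Matrix.head_cons, Matrix.cons_val_two,
    Matrix.cons_val_three, Matrix.vecHead, Matrix.vecTail, Function.comp, pauli,
    Matrix.of_apply, if_true, if_false]
  try ring_nf
  all_goals try simp [Complex.I_sq]
  all_goals try norm_num

lemma cv9 : cval p9 = 8 := by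
  rw [cval_eq]
  simp (config := { decide := true }) only [Fintype.sum_prod_type, sum_zmod2, p9,
    Equiv.coe_fn_mk, Fin.prod_univ_four,
    Matrix.cons_val_zero, Matrix.cons_val_one, Matrix.head_cons, Matrix.cons_val_two,
    Matrix.cons_val_three, Matrix.vecHead, Matrix.vecTail, Function.comp, pauli,
    Matrix.of_apply, if_true, if_false]
  try ring_nf
  all_goals try simp [Complex.I_sq]
  all_goals try norm_num

lemma cv10 : cval p10 = 8 := by
  rw [cval_eq]
  simp (config := { decide := true }) only [Fintype.sum_prod_type, sum_zmod2, p10,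
    Equiv.coe_fn_mk, Fin.prod_univ_four,
    Matrix.cons_val_zero, Matrix.cons_val_one, Matrix.head_cons, Matrix.cons_val_two,
    Matrix.cons_val_three, Matrix.vecHead, Matrix.vecTail, Function.comp, pauli,
    Matrix.of_apply, if_true, if_false]
  try ring_nf
  all_goals try simp [Complex.I_sq]
  all_goals try norm_num

lemma cv11 : cval p11 = 4 := by
  rw [cval_eq]
  simp (config := { decide := true }) only [Fintype.sum_prod_type, sum_zmod2, p11,
    Equiv.coe_fn_mk, Fin.prod_univ_four,
    Matrix.cons_val_zero, Matrix.cons_val_one, Matrix.head_cons, Matrix.cons_val_two,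
    Matrix.cons_val_three, Matrix.vecHead, Matrix.vecTail, Function.comp, pauli,
    Matrix.of_apply, if_true, if_false]
  try ring_nf
  all_goals try simp [Complex.I_sq]
  all_goals try norm_num

lemma cv12 : cval p12 = 4 := by
  rw [cval_eq]
  simp (config := { decide := true }) only [Fintype.sum_prod_type, sum_zmod2, p12,
    Equiv.coe_fn_mk, Fin.prod_univ_four,
    Matrix.cons_val_zero, Matrix.cons_val_one, Matrix.head_cons, Matrix.cons_val_two,
    Matrix.cons_val_three, Matrix.vecHead, Matrix.vecTail, Function.comp, pauli,
    Matrix.of_apply, if_true, if_false]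
  try ring_nf
  all_goals try simp [Complex.I_sq]
  all_goals try norm_num

lemma cv13 : cval p13 = 8 := by
  rw [cval_eq]
  simp (config := { decide := true }) only [Fintype.sum_prod_type, sum_zmod2, p13,
    Equiv.coe_fn_mk, Fin.prod_univ_four,
    Matrix.cons_val_zero, Matrix.cons_val_one, Matrix.head_cons, Matrix.cons_val_two,
    Matrix.cons_val_three, Matrix.vecHead, Matrix.vecTail, Function.comp, pauli,
    Matrix.of_apply, if_true, if_false]
  try ring_nf
  all_goals try simp [Complex.I_sq]
  all_goals try norm_num

lemma cv14 : cval p14 = 8 := by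
  rw [cval_eq]
  simp (config := { decide := true }) only [Fintype.sum_prod_type, sum_zmod2, p14,
    Equiv.coe_fn_mk, Fin.prod_univ_four,
    Matrix.cons_val_zero, Matrix.cons_val_one, Matrix.head_cons, Matrix.cons_val_two,
    Matrix.cons_val_three, Matrix.vecHead, Matrix.vecTail, Function.comp, pauli,
    Matrix.of_apply, if_true, if_false]
  try ring_nf
  all_goals try simp [Complex.I_sq]
  all_goals try norm_num

lemma cv15 : cval p15 = 4 := by
  rw [cval_eq]
  simp (config := { decide := true }) only [Fintype.sum_prod_type, sum_zmod2, p15,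
    Equiv.coe_fn_mk, Fin.prod_univ_four,
    Matrix.cons_val_zero, Matrix.cons_val_one, Matrix.head_cons, Matrix.cons_val_two,
    Matrix.cons_val_three, Matrix.vecHead, Matrix.vecTail, Function.comp, pauli,
    Matrix.of_apply, if_true, if_false]
  try ring_nf
  all_goals try simp [Complex.I_sq]
  all_goals try norm_num

lemma cv16 : cval p16 = 16 := by
  rw [cval_eq]
  simp (config := { decide := true }) only [Fintype.sum_prod_type, sum_zmod2, p16,
    Equiv.coe_fn_mk, Fin.prod_univ_four,
    Matrix.cons_val_zero, Matrix.cons_val_one, Matrix.head_cons, Matrix.cons_val_two,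
    Matrix.cons_val_three, Matrix.vecHead, Matrix.vecTail, Function.comp, pauli,
    Matrix.of_apply, if_true, if_false]
  try ring_nf
  all_goals try simp [Complex.I_sq]
  all_goals try norm_num

lemma cv17 : cval p17 = 8 := by
  rw [cval_eq]
  simp (config := { decide := true }) only [Fintype.sum_prod_type, sum_zmod2, p17,
    Equiv.coe_fn_mk, Fin.prod_univ_four,
    Matrix.cons_val_zero, Matrix.cons_val_one, Matrix.head_cons, Matrix.cons_val_two,
    Matrix.cons_val_three, Matrix.vecHead, Matrix.vecTail, Function.comp, pauli,
    Matrix.of_apply, if_true, if_false]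
  try ring_nf
  all_goals try simp [Complex.I_sq]
  all_goals try norm_num

lemma cv18 : cval p18 = 8 := by
  rw [cval_eq]
  simp (config := { decide := true }) only [Fintype.sum_prod_type, sum_zmod2, p18,
    Equiv.coe_fn_mk, Fin.prod_univ_four,
    Matrix.cons_val_zero, Matrix.cons_val_one, Matrix.head_cons, Matrix.cons_val_two,
    Matrix.cons_val_three, Matrix.vecHead, Matrix.vecTail, Function.comp, pauli,
    Matrix.of_apply, if_true, if_false]
  try ring_nf
  all_goals try simp [Complex.I_sq]
  all_goals try norm_num

lemma cv19 : cval p19 = 4 := by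
  rw [cval_eq]
  simp (config := { decide := true }) only [Fintype.sum_prod_type, sum_zmod2, p19,
    Equiv.coe_fn_mk, Fin.prod_univ_four,
    Matrix.cons_val_zero, Matrix.cons_val_one, Matrix.head_cons, Matrix.cons_val_two,
    Matrix.cons_val_three, Matrix.vecHead, Matrix.vecTail, Function.comp, pauli,
    Matrix.of_apply, if_true, if_false]
  try ring_nf
  all_goals try simp [Complex.I_sq]
  all_goals try norm_num

lemma cv20 : cval p20 = 4 := by
  rw [cval_eq]
  simp (config := { decide := true }) only [Fintype.sum_prod_type, sum_zmod2, p20,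
    Equiv.coe_fn_mk, Fin.prod_univ_four,
    Matrix.cons_val_zero, Matrix.cons_val_one, Matrix.head_cons, Matrix.cons_val_two,
    Matrix.cons_val_three, Matrix.vecHead, Matrix.vecTail, Function.comp, pauli,
    Matrix.of_apply, if_true, if_false]
  try ring_nf
  all_goals try simp [Complex.I_sq]
  all_goals try norm_num

lemma cv21 : cval p21 = 8 := by
  rw [cval_eq]
  simp (config := { decide := true }) only [Fintype.sum_prod_type, sum_zmod2, p21,
    Equiv.coe_fn_mk, Fin.prod_univ_four,
    Matrix.cons_val_zero, Matrix.cons_val_one, Matrix.head_cons, Matrix.cons_val_two,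
    Matrix.cons_val_three, Matrix.vecHead, Matrix.vecTail, Function.comp, pauli,
    Matrix.of_apply, if_true, if_false]
  try ring_nf
  all_goals try simp [Complex.I_sq]
  all_goals try norm_num

lemma cv22 : cval p22 = 8 := by
  rw [cval_eq]
  simp (config := { decide := true }) only [Fintype.sum_prod_type, sum_zmod2, p22,
    Equiv.coe_fn_mk, Fin.prod_univ_four,
    Matrix.cons_val_zero, Matrix.cons_val_one, Matrix.head_cons, Matrix.cons_val_two,
    Matrix.cons_val_three, Matrix.vecHead, Matrix.vecTail, Function.comp, pauli,
    Matrix.of_apply, if_true, if_false]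
  try ring_nf
  all_goals try simp [Complex.I_sq]
  all_goals try norm_num

lemma cv23 : cval p23 = 16 := by
  rw [cval_eq]
  simp (config := { decide := true }) only [Fintype.sum_prod_type, sum_zmod2, p23,
    Equiv.coe_fn_mk, Fin.prod_univ_four,
    Matrix.cons_val_zero, Matrix.cons_val_one, Matrix.head_cons, Matrix.cons_val_two,
    Matrix.cons_val_three, Matrix.vecHead, Matrix.vecTail, Function.comp, pauli,
    Matrix.of_apply, if_true, if_false]
  try ring_nf
  all_goals try simp [Complex.I_sq]
  all_goals try norm_num

lemma sg0 : ((Equiv.Perm.sign p0 : ℤ) : ℂ) = 1 := by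
  norm_num [show Equiv.Perm.sign p0 = 1 from by decide]

lemma sg1 : ((Equiv.Perm.sign p1 : ℤ) : ℂ) = -1 := by
  norm_num [show Equiv.Perm.sign p1 = -1 from by decide]

lemma sg2 : ((Equiv.Perm.sign p2 : ℤ) : ℂ) = -1 := by
  norm_num [show Equiv.Perm.sign p2 = -1 from by decide]

lemma sg3 : ((Equiv.Perm.sign p3 : ℤ) : ℂ) = 1 := by
  norm_num [show Equiv.Perm.sign p3 = 1 from by decide]

lemma sg4 : ((Equiv.Perm.sign p4 : ℤ) : ℂ) = 1 := by
  norm_num [show Equiv.Perm.sign p4 = 1 from by decide]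

lemma sg5 : ((Equiv.Perm.sign p5 : ℤ) : ℂ) = -1 := by
  norm_num [show Equiv.Perm.sign p5 = -1 from by decide]

lemma sg6 : ((Equiv.Perm.sign p6 : ℤ) : ℂ) = -1 := by
  norm_num [show Equiv.Perm.sign p6 = -1 from by decide]

lemma sg7 : ((Equiv.Perm.sign p7 : ℤ) : ℂ) = 1 := by
  norm_num [show Equiv.Perm.sign p7 = 1 from by decide]

lemma sg8 : ((Equiv.Perm.sign p8 : ℤ) : ℂ) = 1 := by
  norm_num [show Equiv.Perm.sign p8 = 1 from by decide]

lemma sg9 : ((Equiv.Perm.sign p9 : ℤ) : ℂ) = -1 := by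
  norm_num [show Equiv.Perm.sign p9 = -1 from by decide]

lemma sg10 : ((Equiv.Perm.sign p10 : ℤ) : ℂ) = -1 := by
  norm_num [show Equiv.Perm.sign p10 = -1 from by decide]

lemma sg11 : ((Equiv.Perm.sign p11 : ℤ) : ℂ) = 1 := by
  norm_num [show Equiv.Perm.sign p11 = 1 from by decide]

lemma sg12 : ((Equiv.Perm.sign p12 : ℤ) : ℂ) = 1 := by
  norm_num [show Equiv.Perm.sign p12 = 1 from by decide]

lemma sg13 : ((Equiv.Perm.sign p13 : ℤ) : ℂ) = -1 := by
  norm_num [show Equiv.Perm.sign p13 = -1 from by decide]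

lemma sg14 : ((Equiv.Perm.sign p14 : ℤ) : ℂ) = -1 := by
  norm_num [show Equiv.Perm.sign p14 = -1 from by decide]

lemma sg15 : ((Equiv.Perm.sign p15 : ℤ) : ℂ) = 1 := by
  norm_num [show Equiv.Perm.sign p15 = 1 from by decide]

lemma sg16 : ((Equiv.Perm.sign p16 : ℤ) : ℂ) = 1 := by
  norm_num [show Equiv.Perm.sign p16 = 1 from by decide]

lemma sg17 : ((Equiv.Perm.sign p17 : ℤ) : ℂ) = -1 := by
  norm_num [show Equiv.Perm.sign p17 = -1 from by decide]

lemma sg18 : ((Equiv.Perm.sign p18 : ℤ) : ℂ) = -1 := by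
  norm_num [show Equiv.Perm.sign p18 = -1 from by decide]

lemma sg19 : ((Equiv.Perm.sign p19 : ℤ) : ℂ) = 1 := by
  norm_num [show Equiv.Perm.sign p19 = 1 from by decide]

lemma sg20 : ((Equiv.Perm.sign p20 : ℤ) : ℂ) = 1 := by
  norm_num [show Equiv.Perm.sign p20 = 1 from by decide]

lemma sg21 : ((Equiv.Perm.sign p21 : ℤ) : ℂ) = -1 := by
  norm_num [show Equiv.Perm.sign p21 = -1 from by decide]

lemma sg22 : ((Equiv.Perm.sign p22 : ℤ) : ℂ) = -1 := by
  norm_num [show Equiv.Perm.sign p22 = -1 from by decide]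

lemma sg23 : ((Equiv.Perm.sign p23 : ℤ) : ℂ) = 1 := by
  norm_num [show Equiv.Perm.sign p23 = 1 from by decide]

lemma sum_perm4 (f : Equiv.Perm (Fin 4) → ℂ) : ∑ σ : Equiv.Perm (Fin 4), f σ =
    f p0 + f p1 + f p2 + f p3 + f p4 + f p5 + f p6 + f p7 + f p8 + f p9 + f p10 + f p11 + f p12 + f p13 + f p14 + f p15 + f p16 + f p17 + f p18 + f p19 + f p20 + f p21 + f p22 + f p23 := by
  rw [show (Finset.univ : Finset (Equiv.Perm (Fin 4))) =
    {p0, p1, p2, p3, p4, p5, p6, p7, p8, p9, p10, p11, p12, p13, p14, p15, p16, p17, p18, p19, p20, p21, p22, p23} from by decide]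
  simp (config := { decide := true }) only [Finset.sum_insert, Finset.mem_insert,
    Finset.mem_singleton, Finset.sum_singleton]
  ring

set_option maxHeartbeats 2000000 in
/-- With `d = 2^n`, `tr(P_{n,4}·P_sym) = (d+1)(d+2)/6` and
`tr(P_{n,4}·P_asym) = (d−1)(d−2)/6`. -/
theorem stmt6 (n : ℕ) (hn : 1 ≤ n) :
    Matrix.trace (stabProj n 4 * symProj (Fin n → ZMod 2) 4)
        = ((2 : ℂ) ^ n + 1) * ((2 : ℂ) ^ n + 2) / 6 ∧
      Matrix.trace (stabProj n 4 * antisymProj (Fin n → ZMod 2) 4)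
        = ((2 : ℂ) ^ n - 1) * ((2 : ℂ) ^ n - 2) / 6 := by
  have d0 : ((2 : ℂ) ^ n) ≠ 0 := pow_ne_zero _ two_ne_zero
  have h16 : (16 : ℂ) ^ n = ((2 : ℂ) ^ n) ^ 4 := by
    rw [show (16 : ℂ) = 2 ^ 4 by norm_num, ← pow_mul, ← pow_mul, Nat.mul_comm]
  have h8 : (8 : ℂ) ^ n = ((2 : ℂ) ^ n) ^ 3 := by
    rw [show (8 : ℂ) = 2 ^ 3 by norm_num, ← pow_mul, ← pow_mul, Nat.mul_comm]
  have h4 : (4 : ℂ) ^ n = ((2 : ℂ) ^ n) ^ 2 := by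
    rw [show (4 : ℂ) = 2 ^ 2 by norm_num, ← pow_mul, ← pow_mul, Nat.mul_comm]
  have h2n : (2 : ℂ) ^ (2 * n) = ((2 : ℂ) ^ n) ^ 2 := by
    rw [← pow_mul, Nat.mul_comm]
  have hfact : ((Nat.factorial 4 : ℕ) : ℂ) = 24 := by norm_num [Nat.factorial]
  constructor
  · have hsym : Matrix.trace (stabProj n 4 * symProj (Fin n → ZMod 2) 4)
        = ((2 : ℂ) ^ (2 * n))⁻¹ * ((Nat.factorial 4 : ℂ))⁻¹ *
          ∑ σ : Equiv.Perm (Fin 4), (cval σ) ^ n := by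
      rw [stabProj, symProj]
      simp only [Matrix.smul_mul, Matrix.mul_smul, Matrix.trace_smul, Matrix.sum_mul,
        Matrix.mul_sum, Matrix.trace_sum, traceA, smul_eq_mul]
      simp only [factorB]
      simp only [Finset.mul_sum]
      exact Finset.sum_congr rfl fun x _ => by ring
    rw [hsym, sum_perm4 (fun σ => (cval σ) ^ n)]
    simp only [cv0, cv1, cv2, cv3, cv4, cv5, cv6, cv7, cv8, cv9, cv10, cv11, cv12, cv13,
      cv14, cv15, cv16, cv17, cv18, cv19, cv20, cv21, cv22, cv23]
    rw [h2n, hfact]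
    rw [h16, h8, h4]
    field_simp
    ring
  · have hasym : Matrix.trace (stabProj n 4 * antisymProj (Fin n → ZMod 2) 4)
        = ((2 : ℂ) ^ (2 * n))⁻¹ * ((Nat.factorial 4 : ℂ))⁻¹ *
          ∑ σ : Equiv.Perm (Fin 4),
            (((Equiv.Perm.sign σ : ℤ) : ℂ) * (cval σ) ^ n) := by
      rw [stabProj, antisymProj]
      simp only [Matrix.smul_mul, Matrix.mul_smul, Matrix.trace_smul, Matrix.sum_mul,
        Matrix.mul_sum, Matrix.trace_sum, traceA, smul_eq_mul]
      simp only [← Finset.mul_sum, factorB]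
      simp only [Finset.mul_sum]
      exact Finset.sum_congr rfl fun x _ => by ring
    rw [hasym, sum_perm4 (fun σ => ((Equiv.Perm.sign σ : ℤ) : ℂ) * (cval σ) ^ n)]
    simp only [cv0, cv1, cv2, cv3, cv4, cv5, cv6, cv7, cv8, cv9, cv10, cv11, cv12, cv13,
      cv14, cv15, cv16, cv17, cv18, cv19, cv20, cv21, cv22, cv23,
      sg0, sg1, sg2, sg3, sg4, sg5, sg6, sg7, sg8, sg9, sg10, sg11, sg12, sg13,
      sg14, sg15, sg16, sg17, sg18, sg19, sg20, sg21, sg22, sg23]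
    rw [h2n, hfact]
    rw [h16, h8, h4]
    field_simp
    ring


end
end

section
/- Let n ≥ 1 and d = 2^n. For each irreducible complex character χ of the symmetric group S_4 of degree 3 (there are exactly two such characters, corresponding to the partitions [2,1,1] and [3,1]), the operator P_χ := (3/24)·Σ_{σ∈S_4} χ(σ)·U_σ on (ℂ^d)^{⊗4} satisfies P_χ · P_{n,4} = 0. Equivalently, the stabilizer code V_{n,4} has trivial intersection with the isotypic components of (ℂ^d)^{⊗4} associated with the partitions [2,1,1] and [3,1]. -/
open scoped BigOperators

noncomputable section

-- ### part I
def pauliZ (a : ZMod 2 × ZMod 2) (x y : ZMod 2) : GaussianInt :=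
    if a = (0, 0) then (if x = y then 1 else 0)
    else if a = (0, 1) then (if x = y + 1 then 1 else 0)
    else if a = (1, 0) then (if x = y then (if x = 0 then 1 else -1) else 0)
    else (if x = y + 1 then (if x = 0 then -⟨0,1⟩ else ⟨0,1⟩) else 0)

lemma pauli_eq (a : ZMod 2 × ZMod 2) (x y : ZMod 2) :
    pauli a x y = GaussianInt.toComplex (pauliZ a x y) := by
  show (if a = (0, 0) then (if x = y then (1:ℂ) else 0)
    else if a = (0, 1) then (if x = y + 1 then 1 else 0)
    else if a = (1, 0) then (if x = y then (if x = 0 then 1 else -1) else 0)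
    else (if x = y + 1 then (if x = 0 then -Complex.I else Complex.I) else 0)) = _
  unfold pauliZ
  split_ifs <;> simp [GaussianInt.toComplex_def] <;> ring

def FZ (p q : Fin 4 → ZMod 2) : GaussianInt := ∑ a : ZMod 2 × ZMod 2, ∏ i, pauliZ a (p i) (q i)

def Fc (p q : Fin 4 → ZMod 2) : ℂ := ∑ a : ZMod 2 × ZMod 2, ∏ i, pauli a (p i) (q i)

lemma Fc_eq (p q : Fin 4 → ZMod 2) : Fc p q = GaussianInt.toComplex (FZ p q) := by
  unfold Fc FZ
  rw [map_sum]
  refine Finset.sum_congr rfl fun a _ => ?_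
  rw [map_prod]
  exact Finset.prod_congr rfl fun i _ => pauli_eq _ _ _

def c1 : Equiv.Perm (Fin 4) := Equiv.swap 0 1 * Equiv.swap 2 3
def c2 : Equiv.Perm (Fin 4) := Equiv.swap 0 2 * Equiv.swap 1 3
def c3 : Equiv.Perm (Fin 4) := Equiv.swap 0 3 * Equiv.swap 1 2

set_option maxHeartbeats 1000000 in
lemma FZ_inv1 : ∀ p q : Fin 4 → ZMod 2, FZ (fun i => p (c1 i)) q = FZ p q := by decide
set_option maxHeartbeats 1000000 in
lemma FZ_inv2 : ∀ p q : Fin 4 → ZMod 2, FZ (fun i => p (c2 i)) q = FZ p q := by decide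
set_option maxHeartbeats 1000000 in
lemma FZ_inv3 : ∀ p q : Fin 4 → ZMod 2, FZ (fun i => p (c3 i)) q = FZ p q := by decide

lemma Fc_inv (c : Equiv.Perm (Fin 4)) (hc : c = c1 ∨ c = c2 ∨ c = c3) (p q : Fin 4 → ZMod 2) :
    Fc (fun i => p (c i)) q = Fc p q := by
  rw [Fc_eq, Fc_eq]
  rcases hc with rfl | rfl | rfl
  · rw [FZ_inv1 p q]
  · rw [FZ_inv2 p q]
  · rw [FZ_inv3 p q]

lemma stab_apply (n : ℕ) (x y : Fin 4 → Fin n → ZMod 2) :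
    stabProj n 4 x y = ((2 : ℂ) ^ (2 * n))⁻¹ * ∏ q : Fin n, Fc (fun i => x i q) (fun i => y i q) := by
  unfold stabProj Fc
  rw [Matrix.smul_apply, Matrix.sum_apply, smul_eq_mul]
  congr 1
  rw [Finset.prod_univ_sum]
  rw [Fintype.piFinset_univ]
  refine Finset.sum_congr rfl fun a _ => ?_
  show ∏ i : Fin 4, PauliW a (x i) (y i) = _
  show ∏ i : Fin 4, ∏ q : Fin n, pauli (a q) (x i q) (y i q) = _
  rw [Finset.prod_comm]

lemma permOp_mul_apply {α : Type*} [DecidableEq α] [Fintype α] {t : ℕ} (σ : Equiv.Perm (Fin t))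
    (M : Matrix (Fin t → α) (Fin t → α) ℂ) (x y : Fin t → α) :
    (permOp α σ * M) x y = M (fun k => x (σ k)) y := by
  rw [Matrix.mul_apply]
  rw [Finset.sum_eq_single (fun k => x (σ k))]
  · simp [permOp]
  · intro z _ hz
    simp [permOp, Ne.symm hz]
  · intro h; exact absurd (Finset.mem_univ _) h

lemma stab_perm_inv (n : ℕ) (c : Equiv.Perm (Fin 4)) (hc : c = c1 ∨ c = c2 ∨ c = c3)
    (x y : Fin 4 → Fin n → ZMod 2) :
    stabProj n 4 (fun k => x (c k)) y = stabProj n 4 x y := by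
  rw [stab_apply, stab_apply]
  congr 1
  exact Finset.prod_congr rfl fun q _ => Fc_inv c hc (fun i => x i q) (fun i => y i q)

lemma permOp_mul_stab (n : ℕ) (c : Equiv.Perm (Fin 4)) (hc : c = c1 ∨ c = c2 ∨ c = c3) :
    permOp (Fin n → ZMod 2) c * stabProj n 4 = stabProj n 4 := by
  ext x y
  rw [permOp_mul_apply, stab_perm_inv n c hc]


open CategoryTheory Equiv in
abbrev S4 := Equiv.Perm (Fin 4)

section CharTheory
open CategoryTheory Equiv

def cls (g0 : S4) : Finset S4 := Finset.univ.filter (fun g => ∃ h, h * g0 * h⁻¹ = g)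

variable (V : FDRep ℂ S4)

/-- class sum as a morphism of representations -/
lemma csum_comm (K : Finset S4)
    (hK : ∀ h : S4, K.val.map (fun π => h * π * h⁻¹) = K.val) (g : S4) :
    (∑ π ∈ K, V.ρ π) * V.ρ g = V.ρ g * (∑ π ∈ K, V.ρ π) := by
    rw [Finset.sum_mul, Finset.mul_sum]
    have h3 : ∑ π ∈ K, V.ρ π * V.ρ g = ∑ π ∈ K, V.ρ (g * π) := by
      conv_lhs => rw [Finset.sum, ← hK g, Multiset.map_map]
      rw [Finset.sum]
      congr 1
      apply Multiset.map_congr rfl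
      intro π _
      show V.ρ (g * π * g⁻¹) * V.ρ g = _
      rw [← map_mul, inv_mul_cancel_right]
    rw [h3]
    exact Finset.sum_congr rfl fun π _ => map_mul V.ρ g π
/-- class sum as a morphism of representations -/
def csumHom (K : Finset S4)
    (hK : ∀ h : S4, K.val.map (fun π => h * π * h⁻¹) = K.val) : V ⟶ V where
  hom := FGModuleCat.ofHom (∑ π ∈ K, V.ρ π)
  comm := fun g => by
    have := csum_comm V K hK g
    ext x
    exact congrArg (fun f => f x) this

lemma csum_scalar [Simple V] (K : Finset S4)
    (hK : ∀ h : S4, K.val.map (fun π => h * π * h⁻¹) = K.val) :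
    ∃ c : ℂ, (∑ π ∈ K, V.ρ π) = c • (1 : V →ₗ[ℂ] V) := by
  obtain ⟨c, hc⟩ := CategoryTheory.endomorphism_simple_eq_smul_id ℂ (csumHom V K hK)
  refine ⟨c, ?_⟩
  have := congrArg (fun f => f.hom.hom.hom) hc
  exact this.symm

lemma sum_char_eq [Simple V] (K : Finset S4) (c : ℂ)
    (h : (∑ π ∈ K, V.ρ π) = c • (1 : V →ₗ[ℂ] V)) (σ : S4) :
    ∑ π ∈ K, V.character (σ * π) = c * V.character σ := by
  have h1 : ∑ π ∈ K, V.character (σ * π)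
      = LinearMap.trace ℂ V ((V.ρ σ) * (∑ π ∈ K, V.ρ π)) := by
    rw [Finset.mul_sum, map_sum]
    exact Finset.sum_congr rfl fun π _ => by rw [FDRep.character, map_mul]
  rw [h1, h, mul_smul_comm, map_smul, mul_one, smul_eq_mul, FDRep.character]


def g2 : S4 := Equiv.swap 0 1
def g22 : S4 := Equiv.swap 0 1 * Equiv.swap 2 3
def g3 : S4 := Equiv.swap 0 1 * Equiv.swap 1 2
def g4 : S4 := Equiv.swap 0 1 * Equiv.swap 1 2 * Equiv.swap 2 3

set_option maxHeartbeats 1000000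

lemma conj2 : ∀ h : S4, (cls g2).val.map (fun π => h * π * h⁻¹) = (cls g2).val := by decide
lemma conj22 : ∀ h : S4, (cls g22).val.map (fun π => h * π * h⁻¹) = (cls g22).val := by decide
lemma conj3 : ∀ h : S4, (cls g3).val.map (fun π => h * π * h⁻¹) = (cls g3).val := by decide
lemma conj4 : ∀ h : S4, (cls g4).val.map (fun π => h * π * h⁻¹) = (cls g4).val := by decide

lemma prod22_22 : ((cls g22) ×ˢ (cls g22)).val.map (fun p => p.1 * p.2)
    = Multiset.replicate 3 1 + ((cls g22).val + (cls g22).val) := by decide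
lemma prod2_22 : ((cls g2) ×ˢ (cls g22)).val.map (fun p => p.1 * p.2)
    = (cls g2).val + ((cls g4).val + (cls g4).val) := by decide
lemma prod2_2 : ((cls g2) ×ˢ (cls g2)).val.map (fun p => p.1 * p.2)
    = Multiset.replicate 6 1 + ((cls g22).val + (cls g22).val)
      + ((cls g3).val + (cls g3).val + (cls g3).val) := by decide
lemma prod2_3 : ((cls g2) ×ˢ (cls g3)).val.map (fun p => p.1 * p.2)
    = ((cls g2).val + (cls g2).val + (cls g2).val + (cls g2).val)
      + ((cls g4).val + (cls g4).val + (cls g4).val + (cls g4).val) := by decide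

lemma univ_partition : (Finset.univ : Finset S4).val
    = Multiset.replicate 1 1 + ((cls g2).val + (cls g22).val + (cls g3).val + (cls g4).val) := by
  decide

lemma inv_mem2 : ∀ g ∈ cls g2, g⁻¹ ∈ cls g2 := by decide
lemma inv_mem22 : ∀ g ∈ cls g22, g⁻¹ ∈ cls g22 := by decide
lemma inv_mem3 : ∀ g ∈ cls g3, g⁻¹ ∈ cls g3 := by decide
lemma inv_mem4 : ∀ g ∈ cls g4, g⁻¹ ∈ cls g4 := by decide

lemma card2 : (cls g2).card = 6 := by decide
lemma card22 : (cls g22).card = 3 := by decide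
lemma card3 : (cls g3).card = 8 := by decide
lemma card4 : (cls g4).card = 6 := by decide

lemma cls22_explicit : cls g22 = {c1, c2, c3} := by decide

variable {V : FDRep ℂ S4}

lemma char_const (g0 : S4) : ∀ g ∈ cls g0, V.character g = V.character g0 := by
  intro g hg
  obtain ⟨h, rfl⟩ := (Finset.mem_filter.mp hg).2
  exact FDRep.char_conj V g0 h

lemma sum_class_char (g0 : S4) :
    ∑ π ∈ cls g0, V.character π = (cls g0).card * V.character g0 := by
  rw [Finset.sum_congr rfl (char_const g0), Finset.sum_const, nsmul_eq_mul]

lemma sum_class_char_inv (g0 : S4) (hinv : ∀ g ∈ cls g0, g⁻¹ ∈ cls g0) :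
    ∑ g ∈ cls g0, V.character g * V.character g⁻¹
      = (cls g0).card * (V.character g0 * V.character g0) := by
  rw [Finset.sum_congr rfl (fun g hg => by
    rw [char_const g0 g hg, char_const g0 _ (hinv g hg)]), Finset.sum_const, nsmul_eq_mul]

/-- the pair-sum over two classes, evaluated through a multiset identity -/
lemma sum_pairs (K1 K2 : Finset S4) (m : Multiset S4)
    (hm : (K1 ×ˢ K2).val.map (fun p => p.1 * p.2) = m) (f : S4 → ℂ) :
    ∑ p ∈ K1 ×ˢ K2, f (p.1 * p.2) = (m.map f).sum := by
  rw [← hm, Multiset.map_map]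
  rfl

lemma sum_pairs_char [Simple V] (K1 K2 : Finset S4) (c1 c2 : ℂ)
    (h1 : (∑ π ∈ K1, V.ρ π) = c1 • (1 : V →ₗ[ℂ] V))
    (h2 : (∑ π ∈ K2, V.ρ π) = c2 • (1 : V →ₗ[ℂ] V)) :
    ∑ p ∈ K1 ×ˢ K2, V.character (p.1 * p.2) = c1 * c2 * V.character 1 := by
  have key : ∑ p ∈ K1 ×ˢ K2, V.character (p.1 * p.2)
      = LinearMap.trace ℂ V ((∑ π ∈ K1, V.ρ π) * (∑ π ∈ K2, V.ρ π)) := by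
    rw [Finset.sum_mul_sum, Finset.sum_product, map_sum]
    refine Finset.sum_congr rfl fun τ _ => ?_
    rw [map_sum]
    exact Finset.sum_congr rfl fun π _ => by rw [FDRep.character, map_mul]
  rw [key, h1, h2, smul_mul_smul_comm, one_mul, map_smul, smul_eq_mul, FDRep.character, _root_.map_one V.ρ]

lemma card_S4 : Fintype.card S4 = 24 := by
  rw [Fintype.card_perm, Fintype.card_fin]
  rfl

lemma char_norm [Simple V] : ∑ g : S4, V.character g * V.character g⁻¹ = 24 := by
  have hc : (Nat.card S4) = 24 := by rw [Nat.card_eq_fintype_card]; exact card_S4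
  letI : Invertible ((Nat.card S4 : ℂ)) :=
    invertibleOfNonzero (by rw [hc]; norm_num)
  have h := FDRep.char_orthonormal (k := ℂ) (G := S4) V V
  rw [if_pos ⟨Iso.refl V⟩, hc] at h
  push_cast at h
  linear_combination 24 * h

lemma msum (K : Finset S4) (f : S4 → ℂ) : (K.val.map f).sum = ∑ π ∈ K, f π := rfl

lemma msum_rep (n : ℕ) (f : S4 → ℂ) :
    ((Multiset.replicate n (1 : S4)).map f).sum = n * f 1 := by
  rw [Multiset.map_replicate, Multiset.sum_replicate, nsmul_eq_mul]

lemma w22_eq [Simple V] (hdeg : V.character 1 = 3) :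
    ∃ w : ℂ, ((∑ π ∈ cls g22, V.ρ π) = w • (1 : V →ₗ[ℂ] V)) ∧ w = -1 := by
  obtain ⟨w2, h2⟩ := csum_scalar V (cls g2) conj2
  obtain ⟨w22, h22⟩ := csum_scalar V (cls g22) conj22
  obtain ⟨w3, h3⟩ := csum_scalar V (cls g3) conj3
  obtain ⟨w4, h4⟩ := csum_scalar V (cls g4) conj4
  refine ⟨w22, h22, ?_⟩
  -- class sums of the character
  have a2 : ∑ π ∈ cls g2, V.character π = w2 * 3 := by
    have := sum_char_eq (V := V) (cls g2) w2 h2 1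
    simpa [one_mul, hdeg] using this
  have a22 : ∑ π ∈ cls g22, V.character π = w22 * 3 := by
    have := sum_char_eq (V := V) (cls g22) w22 h22 1
    simpa [one_mul, hdeg] using this
  have a3 : ∑ π ∈ cls g3, V.character π = w3 * 3 := by
    have := sum_char_eq (V := V) (cls g3) w3 h3 1
    simpa [one_mul, hdeg] using this
  have a4 : ∑ π ∈ cls g4, V.character π = w4 * 3 := by
    have := sum_char_eq (V := V) (cls g4) w4 h4 1
    simpa [one_mul, hdeg] using this
  -- character values on class representatives
  have A2 : 6 * V.character g2 = w2 * 3 := by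
    rw [← a2, sum_class_char, card2]; push_cast; ring
  have A22 : 3 * V.character g22 = w22 * 3 := by
    rw [← a22, sum_class_char, card22]; push_cast; ring
  have A3 : 8 * V.character g3 = w3 * 3 := by
    rw [← a3, sum_class_char, card3]; push_cast; ring
  have A4 : 6 * V.character g4 = w4 * 3 := by
    rw [← a4, sum_class_char, card4]; push_cast; ring
  -- pair-sum (class algebra) relations
  have B1 : w22 * w22 * 3 = 3 * 3 + (w22 * 3 + w22 * 3) := by
    have hp := sum_pairs_char (cls g22) (cls g22) w22 w22 h22 h22
    rw [sum_pairs _ _ _ prod22_22] at hp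
    simp only [Multiset.map_add, Multiset.sum_add, msum_rep, msum] at hp
    rw [a22, hdeg] at hp
    push_cast at hp; linear_combination hp.symm
  have B2 : w2 * w22 * 3 = w2 * 3 + (w4 * 3 + w4 * 3) := by
    have hp := sum_pairs_char (cls g2) (cls g22) w2 w22 h2 h22
    rw [sum_pairs _ _ _ prod2_22] at hp
    simp only [Multiset.map_add, Multiset.sum_add, msum_rep, msum] at hp
    rw [a2, a4, hdeg] at hp
    push_cast at hp; linear_combination hp.symm
  have B3 : w2 * w2 * 3 = 6 * 3 + (w22 * 3 + w22 * 3) + (w3 * 3 + w3 * 3 + w3 * 3) := by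
    have hp := sum_pairs_char (cls g2) (cls g2) w2 w2 h2 h2
    rw [sum_pairs _ _ _ prod2_2] at hp
    simp only [Multiset.map_add, Multiset.sum_add, msum_rep, msum] at hp
    rw [a22, a3, hdeg] at hp
    push_cast at hp; linear_combination hp.symm
  have B4 : w2 * w3 * 3 = (w2 * 3 + w2 * 3 + w2 * 3 + w2 * 3) + (w4 * 3 + w4 * 3 + w4 * 3 + w4 * 3) := by
    have hp := sum_pairs_char (cls g2) (cls g3) w2 w3 h2 h3
    rw [sum_pairs _ _ _ prod2_3] at hp
    simp only [Multiset.map_add, Multiset.sum_add, msum_rep, msum] at hp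
    rw [a2, a4, hdeg] at hp
    push_cast at hp; linear_combination hp.symm
  -- orthogonality (norm) relation
  have hsplit : ∑ g : S4, V.character g * V.character g⁻¹
      = V.character 1 * V.character 1⁻¹
        + ((∑ g ∈ cls g2, V.character g * V.character g⁻¹)
        + (∑ g ∈ cls g22, V.character g * V.character g⁻¹)
        + (∑ g ∈ cls g3, V.character g * V.character g⁻¹)
        + (∑ g ∈ cls g4, V.character g * V.character g⁻¹)) := by
    show ((Finset.univ : Finset S4).val.map (fun g => V.character g * V.character g⁻¹)).sum = _
    rw [univ_partition]
    simp only [Multiset.map_add, Multiset.sum_add, msum_rep, msum]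
    push_cast; ring
  have C : (9 : ℂ) + (6 * V.character g2 ^ 2 + 3 * V.character g22 ^ 2
      + 8 * V.character g3 ^ 2 + 6 * V.character g4 ^ 2) = 24 := by
    have hn := char_norm (V := V)
    rw [hsplit, inv_one, hdeg, sum_class_char_inv g2 inv_mem2, sum_class_char_inv g22 inv_mem22,
      sum_class_char_inv g3 inv_mem3, sum_class_char_inv g4 inv_mem4,
      card2, card22, card3, card4] at hn
    rw [← hn]; push_cast; ring
  -- now pure algebra
  set x2 := V.character g2
  set x22 := V.character g22
  set x3 := V.character g3
  set x4 := V.character g4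
  have hb1 : (w22 - 3) * (w22 + 1) = 0 := by linear_combination (1/3) * B1
  rcases mul_eq_zero.mp hb1 with h | h
  · exfalso
    have hw4 : w4 = w2 := by linear_combination (-1/6) * B2 + (w2/2) * h
    -- express C in terms of the w's
    have C' : (9 : ℂ) + ((3/2) * w2^2 + 3 * w22^2 + (9/8) * w3^2 + (3/2) * w4^2) = 24 := by
      linear_combination C - (x2 + w2/2) * A2 - (x22 + w22) * A22
        - (x3 + (3/8) * w3) * A3 - (x4 + w4/2) * A4
    have hch : w2 * (w3 - 8) = 0 := by linear_combination (1/3) * B4 + 4 * hw4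
    have hw22 : w22 = 3 := by linear_combination h
    rcases mul_eq_zero.mp hch with h2' | h3'
    · have hw3 : w3 = -4 := by linear_combination (-1/9) * B3 + (-2/3) * h + (w2/3) * h2'
      have hw4' : w4 = 0 := by linear_combination hw4 + h2'
      rw [h2', hw4', hw22, hw3] at C'
      norm_num at C'
    · have hw3 : w3 = 8 := by linear_combination h3'
      have hw2sq : w2^2 = 36 := by linear_combination (1/3) * B3 + 2 * h + 3 * hw3
      have : (216 : ℂ) = 24 := by
        linear_combination C' - 3 * hw2sq - (3/2) * (w4 + w2) * hw4
          - 3 * (w22 + 3) * h - (9/8) * (w3 + 8) * hw3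
      norm_num at this
  · linear_combination h

end CharTheory

section Assembly
open CategoryTheory

variable {V : FDRep ℂ S4}

lemma char_V4_sum [Simple V] (hdeg : V.character 1 = 3) (σ : S4) :
    V.character σ + (V.character (σ * c1) + V.character (σ * c2) + V.character (σ * c3)) = 0 := by
  obtain ⟨w, hw, hw1⟩ := w22_eq hdeg
  have hs := sum_char_eq (V := V) (cls g22) w hw σ
  rw [cls22_explicit] at hs
  rw [Finset.sum_insert (by decide), Finset.sum_insert (by decide),
    Finset.sum_singleton] at hs
  linear_combination hs + (V.character σ) * hw1

lemma permOp_mul_stab' (n : ℕ) (σ c : Equiv.Perm (Fin 4)) (hc : c = c1 ∨ c = c2 ∨ c = c3) :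
    permOp (Fin n → ZMod 2) (σ * c) * stabProj n 4 = permOp (Fin n → ZMod 2) σ * stabProj n 4 := by
  ext x y
  rw [permOp_mul_apply, permOp_mul_apply]
  exact stab_perm_inv n c hc (fun j => x (σ j)) y

end Assembly

/-- For each irreducible complex character `χ` of `S_4` of degree 3,
the isotypic projector `P_χ = (3/24)·Σ_σ χ(σ)·U_σ` on `(ℂ^d)^{⊗4}` annihilates the
stabilizer projector: `P_χ · P_{n,4} = 0`. -/
theorem stmt7 (n : ℕ) (hn : 1 ≤ n)
    (V : FDRep ℂ (Equiv.Perm (Fin 4))) [CategoryTheory.Simple V]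
    (hdeg : V.character 1 = 3) :
    (((3 : ℂ) / 24) • ∑ σ : Equiv.Perm (Fin 4),
        V.character σ • permOp (Fin n → ZMod 2) σ) * stabProj n 4 = 0  := by
  classical
  have hT : ∀ c : Equiv.Perm (Fin 4), c = c1 ∨ c = c2 ∨ c = c3 →
      (∑ σ : Equiv.Perm (Fin 4),
          V.character σ • (permOp (Fin n → ZMod 2) σ * stabProj n 4))
      = ∑ σ : Equiv.Perm (Fin 4),
          V.character (σ * c) • (permOp (Fin n → ZMod 2) σ * stabProj n 4) := by
    intro c hc
    refine (Fintype.sum_equiv (Equiv.mulRight c)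
      (fun σ => V.character (σ * c) • (permOp (Fin n → ZMod 2) σ * stabProj n 4))
      (fun σ => V.character σ • (permOp (Fin n → ZMod 2) σ * stabProj n 4)) fun σ => ?_).symm
    show V.character (σ * c) • (permOp (Fin n → ZMod 2) σ * stabProj n 4)
      = V.character (Equiv.mulRight c σ) • (permOp (Fin n → ZMod 2) (Equiv.mulRight c σ) * stabProj n 4)
    rw [Equiv.coe_mulRight, permOp_mul_stab' n σ c hc]
  have hzero : (∑ σ : Equiv.Perm (Fin 4),
      V.character σ • (permOp (Fin n → ZMod 2) σ * stabProj n 4)) = 0 := by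
    have h4 : (4 : ℂ) • (∑ σ : Equiv.Perm (Fin 4),
        V.character σ • (permOp (Fin n → ZMod 2) σ * stabProj n 4)) = 0 := by
      have expand : (4 : ℂ) • (∑ σ : Equiv.Perm (Fin 4),
          V.character σ • (permOp (Fin n → ZMod 2) σ * stabProj n 4))
          = (∑ σ : Equiv.Perm (Fin 4), V.character σ • (permOp (Fin n → ZMod 2) σ * stabProj n 4))
            + ((∑ σ : Equiv.Perm (Fin 4), V.character (σ * c1) • (permOp (Fin n → ZMod 2) σ * stabProj n 4))
            + (∑ σ : Equiv.Perm (Fin 4), V.character (σ * c2) • (permOp (Fin n → ZMod 2) σ * stabProj n 4))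
            + (∑ σ : Equiv.Perm (Fin 4), V.character (σ * c3) • (permOp (Fin n → ZMod 2) σ * stabProj n 4))) := by
        rw [← hT c1 (Or.inl rfl), ← hT c2 (Or.inr (Or.inl rfl)), ← hT c3 (Or.inr (Or.inr rfl))]
        rw [show ((4 : ℂ)) = 1 + 1 + 1 + 1 by norm_num]
        rw [add_smul, add_smul, add_smul, one_smul]
        abel
      rw [expand, ← Finset.sum_add_distrib, ← Finset.sum_add_distrib, ← Finset.sum_add_distrib]
      refine Finset.sum_eq_zero fun σ _ => ?_
      have h0 := char_V4_sum (V := V) hdeg σ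
      have hexp : V.character σ • (permOp (Fin n → ZMod 2) σ * stabProj n 4)
          + (V.character (σ * c1) • (permOp (Fin n → ZMod 2) σ * stabProj n 4)
          + V.character (σ * c2) • (permOp (Fin n → ZMod 2) σ * stabProj n 4)
          + V.character (σ * c3) • (permOp (Fin n → ZMod 2) σ * stabProj n 4))
          = (V.character σ + (V.character (σ * c1) + V.character (σ * c2)
            + V.character (σ * c3))) • (permOp (Fin n → ZMod 2) σ * stabProj n 4) := by
        rw [add_smul, add_smul, add_smul]
      rw [hexp, h0, zero_smul]
    have := smul_eq_zero.mp h4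
    rcases this with h | h
    · norm_num at h
    · exact h
  calc (((3 : ℂ) / 24) • ∑ σ : Equiv.Perm (Fin 4),
        V.character σ • permOp (Fin n → ZMod 2) σ) * stabProj n 4
      = ((3 : ℂ) / 24) • ∑ σ : Equiv.Perm (Fin 4),
        V.character σ • (permOp (Fin n → ZMod 2) σ * stabProj n 4) := by
        rw [smul_mul_assoc, Finset.sum_mul]
        congr 1
        exact Finset.sum_congr rfl fun σ _ => smul_mul_assoc _ _ _
    _ = 0 := by rw [hzero, smul_zero]

end
end

section
/- Let n ≥ 1, d = 2^n, and let ψ ∈ ℂ^d be a unit vector. Then 2d/(d+1) ≤ Σ_{a∈𝔽₂^{2n}} |⟨ψ, W_a ψ⟩|^4 ≤ d; equivalently, with α_+(ψ) := tr(P_{n,4}·(|ψ⟩⟨ψ|)^{⊗4}) = (1/d²)·Σ_a ⟨ψ, W_a ψ⟩^4, one has 2/(d(d+1)) ≤ α_+(ψ) ≤ 1/d. -/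
open scoped BigOperators

noncomputable section

lemma z2 (x : ZMod 2) : x = 0 ∨ x = 1 := by revert x; decide

lemma pauli_conj : ∀ a x y, (starRingEnd ℂ) (pauli a x y) = pauli a y x := by
  rintro ⟨a1, a2⟩ x y
  rcases z2 a1 with h1|h1 <;> rcases z2 a2 with h2|h2 <;> subst h1 h2 <;>
    rcases z2 x with hx|hx <;> rcases z2 y with hy|hy <;> subst hx hy <;>
    simp (config := { decide := true }) [pauli, Complex.conj_I]

lemma pauli_sq : ∀ a x z, ∑ y, pauli a x y * pauli a y z = if x = z then 1 else 0 := by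
  rintro ⟨a1, a2⟩ x z
  have hs : (Finset.univ : Finset (ZMod 2)) = {0, 1} := by decide
  rcases z2 a1 with h1|h1 <;> rcases z2 a2 with h2|h2 <;> subst h1 h2 <;>
    rcases z2 x with hx|hx <;> rcases z2 z with hz|hz <;> subst hx hz <;>
    rw [hs] <;> simp (config := { decide := true }) [pauli, Complex.I_mul_I]

lemma pauli_sum : ∀ x y x' y', ∑ a : ZMod 2 × ZMod 2, pauli a x y * pauli a x' y' =
    (if x = y' then 2 else 0) * (if x' = y then 1 else 0) := by
  intro x y x' y'
  have hs : (Finset.univ : Finset (ZMod 2 × ZMod 2)) = {(0,0), (0,1), (1,0), (1,1)} := by decide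
  rcases z2 x with hx|hx <;> rcases z2 y with hy|hy <;> rcases z2 x' with hx'|hx' <;>
    rcases z2 y' with hy'|hy' <;> subst hx hy hx' hy' <;>
    rw [hs] <;> simp (config := { decide := true }) [pauli, Complex.I_mul_I] <;> norm_num

variable {n : ℕ}

lemma W_conj (a : Fin n → ZMod 2 × ZMod 2) (x y : Fin n → ZMod 2) :
    (starRingEnd ℂ) (PauliW a x y) = PauliW a y x := by
  simp only [PauliW, Matrix.of_apply, map_prod, pauli_conj]

lemma W_sq (a : Fin n → ZMod 2 × ZMod 2) (x z : Fin n → ZMod 2) :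
    ∑ y : Fin n → ZMod 2, PauliW a x y * PauliW a y z = if x = z then 1 else 0 := by
  have : ∀ y : Fin n → ZMod 2, PauliW a x y * PauliW a y z
      = ∏ i, (pauli (a i) (x i) (y i) * pauli (a i) (y i) (z i)) := by
    intro y; simp [PauliW, Finset.prod_mul_distrib]
  simp_rw [this]
  rw [← Fintype.piFinset_univ, ← Finset.prod_univ_sum (fun _ => Finset.univ)
    (fun i b => pauli (a i) (x i) b * pauli (a i) b (z i))]
  simp_rw [pauli_sq]
  rw [Finset.prod_boole]
  simp [funext_iff]

lemma W_sum (x y x' y' : Fin n → ZMod 2) :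
    ∑ a : Fin n → ZMod 2 × ZMod 2, PauliW a x y * PauliW a x' y'
      = (2:ℂ)^n * (if x = y' then 1 else 0) * (if x' = y then 1 else 0) := by
  have : ∀ a : Fin n → ZMod 2 × ZMod 2, PauliW a x y * PauliW a x' y'
      = ∏ i, (pauli (a i) (x i) (y i) * pauli (a i) (x' i) (y' i)) := by
    intro a; simp [PauliW, Finset.prod_mul_distrib]
  simp_rw [this]
  rw [← Fintype.piFinset_univ, ← Finset.prod_univ_sum (fun _ => Finset.univ)
    (fun i b => pauli b (x i) (y i) * pauli b (x' i) (y' i))]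
  simp_rw [pauli_sum]
  have h2 : ∀ i : Fin n, ((if x i = y' i then (2:ℂ) else 0) * (if x' i = y i then 1 else 0))
      = 2 * ((if x i = y' i then (1:ℂ) else 0) * (if x' i = y i then 1 else 0)) := by
    intro i; by_cases h : x i = y' i <;> simp [h] <;> ring
  simp_rw [h2]
  rw [Finset.prod_mul_distrib]
  simp only [Finset.prod_const, Finset.card_univ, Fintype.card_fin]
  rw [Finset.prod_mul_distrib, Finset.prod_boole, Finset.prod_boole]
  simp [funext_iff, mul_assoc]

abbrev X (n : ℕ) := Fin n → ZMod 2
abbrev A (n : ℕ) := Fin n → ZMod 2 × ZMod 2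

def cc (ψ : X n → ℂ) (a : A n) : ℂ :=
  ∑ x, (starRingEnd ℂ) (ψ x) * Matrix.mulVec (PauliW a) ψ x

lemma cc_expand (ψ : X n → ℂ) (a : A n) :
    cc ψ a = ∑ p : X n × X n, (starRingEnd ℂ) (ψ p.1) * PauliW a p.1 p.2 * ψ p.2 := by
  rw [Fintype.sum_prod_type, cc]
  congr 1; funext x
  rw [Matrix.mulVec, dotProduct, Finset.mul_sum]
  congr 1; funext y; ring

lemma cc_conj (ψ : X n → ℂ) (a : A n) : (starRingEnd ℂ) (cc ψ a) = cc ψ a := by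
  rw [cc_expand, map_sum]
  rw [← Equiv.sum_comp (Equiv.prodComm (X n) (X n))]
  apply Finset.sum_congr rfl
  intro p _
  simp [Equiv.prodComm, W_conj, mul_comm, mul_assoc, mul_left_comm]

lemma sum_cc_sq (ψ : X n → ℂ) (hψ : ∑ x, (starRingEnd ℂ) (ψ x) * ψ x = 1) :
    ∑ a : A n, (cc ψ a)^2 = 2^n := by
  have e1 : ∀ a : A n, (cc ψ a)^2 = ∑ q : (X n × X n) × (X n × X n),
      ((starRingEnd ℂ) (ψ q.1.1) * ψ q.1.2 * ((starRingEnd ℂ) (ψ q.2.1) * ψ q.2.2)) *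
        (PauliW a q.1.1 q.1.2 * PauliW a q.2.1 q.2.2) := by
    intro a
    rw [sq, cc_expand, Finset.sum_mul_sum]
    conv_rhs => rw [Fintype.sum_prod_type]
    apply Finset.sum_congr rfl; intro p _
    apply Finset.sum_congr rfl; intro q _; ring
  simp_rw [e1]
  rw [Finset.sum_comm]
  have e2 : ∀ q : (X n × X n) × (X n × X n),
      ∑ a : A n, ((starRingEnd ℂ) (ψ q.1.1) * ψ q.1.2 * ((starRingEnd ℂ) (ψ q.2.1) * ψ q.2.2)) *
        (PauliW a q.1.1 q.1.2 * PauliW a q.2.1 q.2.2)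
      = ((starRingEnd ℂ) (ψ q.1.1) * ψ q.1.2 * ((starRingEnd ℂ) (ψ q.2.1) * ψ q.2.2)) *
        ((2:ℂ)^n * (if q.1.1 = q.2.2 then 1 else 0) * (if q.2.1 = q.1.2 then 1 else 0)) := by
    intro q
    rw [← Finset.mul_sum, W_sum]
  simp_rw [e2]
  rw [Fintype.sum_prod_type]
  simp_rw [Fintype.sum_prod_type]
  simp only [mul_ite, mul_one, mul_zero, Finset.sum_ite_irrel, Finset.sum_const_zero,
    Finset.sum_ite_eq, Finset.sum_ite_eq', Finset.mem_univ, if_true]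
  have : ∀ x y : X n, (starRingEnd ℂ) (ψ x) * ψ y * ((starRingEnd ℂ) (ψ y) * ψ x) * (2:ℂ)^n
      = (2:ℂ)^n * (((starRingEnd ℂ) (ψ x) * ψ x) * ((starRingEnd ℂ) (ψ y) * ψ y)) := by
    intro x y; ring
  simp_rw [this]
  have h3 : (∑ x : X n, ∑ y : X n, (2:ℂ)^n *
        ((starRingEnd ℂ) (ψ x) * ψ x * ((starRingEnd ℂ) (ψ y) * ψ y)))
      = 2^n * ((∑ x, (starRingEnd ℂ) (ψ x) * ψ x) * (∑ y, (starRingEnd ℂ) (ψ y) * ψ y)) := by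
    rw [Finset.sum_mul_sum, Finset.mul_sum]
    apply Finset.sum_congr rfl; intro x _
    rw [Finset.mul_sum]
  rw [h3, hψ, mul_one, mul_one]

lemma W_zero (x y : X n) : PauliW (fun _ => ((0:ZMod 2), (0:ZMod 2))) x y
    = if x = y then 1 else 0 := by
  have : ∀ i : Fin n, pauli ((0:ZMod 2), (0:ZMod 2)) (x i) (y i)
      = if x i = y i then 1 else 0 := by intro i; simp [pauli]
  rw [PauliW, Matrix.of_apply]
  simp_rw [this]
  rw [Finset.prod_boole]
  simp [funext_iff]

lemma cc_zero (ψ : X n → ℂ) (hψ : ∑ x, (starRingEnd ℂ) (ψ x) * ψ x = 1) :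
    cc ψ (fun _ => ((0:ZMod 2), (0:ZMod 2))) = 1 := by
  rw [cc]
  have : ∀ x, Matrix.mulVec (PauliW (fun _ => ((0:ZMod 2), (0:ZMod 2)))) ψ x = ψ x := by
    intro x
    rw [Matrix.mulVec, dotProduct]
    simp_rw [W_zero]
    simp
  simp_rw [this]
  exact hψ

lemma m_norm (ψ : X n → ℂ) (hψ : ∑ x, (starRingEnd ℂ) (ψ x) * ψ x = 1) (a : A n) :
    ∑ x, (starRingEnd ℂ) (Matrix.mulVec (PauliW a) ψ x) * Matrix.mulVec (PauliW a) ψ x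
      = 1 := by
  have e : ∀ x, (starRingEnd ℂ) (Matrix.mulVec (PauliW a) ψ x) * Matrix.mulVec (PauliW a) ψ x
      = ∑ p : X n × X n, (PauliW a p.1 x * PauliW a x p.2) *
          ((starRingEnd ℂ) (ψ p.1) * ψ p.2) := by
    intro x
    rw [Matrix.mulVec, dotProduct, map_sum, Finset.sum_mul_sum]
    conv_rhs => rw [Fintype.sum_prod_type]
    apply Finset.sum_congr rfl; intro y _
    apply Finset.sum_congr rfl; intro y' _
    simp only [map_mul, W_conj]
    ring
  simp_rw [e]
  rw [Finset.sum_comm]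
  have e2 : ∀ p : X n × X n, ∑ x, (PauliW a p.1 x * PauliW a x p.2) *
        ((starRingEnd ℂ) (ψ p.1) * ψ p.2)
      = (if p.1 = p.2 then 1 else 0) * ((starRingEnd ℂ) (ψ p.1) * ψ p.2) := by
    intro p
    rw [← Finset.sum_mul, W_sq]
  simp_rw [e2]
  rw [Fintype.sum_prod_type]
  simp only [ite_mul, one_mul, zero_mul, Finset.sum_ite_eq, Finset.mem_univ, if_true]
  exact hψ

lemma re_cc_le (ψ : X n → ℂ) (hψ : ∑ x, (starRingEnd ℂ) (ψ x) * ψ x = 1) (a : A n) :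
    |(cc ψ a).re| ≤ 1 := by
  set m := Matrix.mulVec (PauliW a) ψ with hm
  have hψr : ∑ x, Complex.normSq (ψ x) = 1 := by
    have h1 : (∑ x, (starRingEnd ℂ) (ψ x) * ψ x).re = 1 := by rw [hψ]; simp
    rw [← h1, Complex.re_sum]
    apply Finset.sum_congr rfl; intro x _
    rw [← Complex.normSq_eq_conj_mul_self]
    simp
  have hmr : ∑ x, Complex.normSq (m x) = 1 := by
    have h1 : (∑ x, (starRingEnd ℂ) (m x) * m x).re = 1 := by rw [hm, m_norm ψ hψ a]; simp
    rw [← h1, Complex.re_sum]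
    apply Finset.sum_congr rfl; intro x _
    rw [← Complex.normSq_eq_conj_mul_self]
    simp
  have hcross : ∑ x, (ψ x * (starRingEnd ℂ) (m x)).re = (cc ψ a).re := by
    rw [← Complex.re_sum]
    have : ∑ x, ψ x * (starRingEnd ℂ) (m x) = (starRingEnd ℂ) (cc ψ a) := by
      rw [cc, map_sum]
      apply Finset.sum_congr rfl; intro x _
      rw [map_mul, Complex.conj_conj]
    rw [this, Complex.conj_re]
  have hplus : (0:ℝ) ≤ ∑ x, Complex.normSq (ψ x + m x) :=
    Finset.sum_nonneg fun _ _ => Complex.normSq_nonneg _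
  have hminus : (0:ℝ) ≤ ∑ x, Complex.normSq (ψ x - m x) :=
    Finset.sum_nonneg fun _ _ => Complex.normSq_nonneg _
  rw [Finset.sum_congr rfl (fun x _ => Complex.normSq_add (ψ x) (m x))] at hplus
  rw [Finset.sum_congr rfl (fun x _ => Complex.normSq_sub (ψ x) (m x))] at hminus
  rw [Finset.sum_add_distrib, Finset.sum_add_distrib, hψr, hmr] at hplus
  rw [Finset.sum_sub_distrib, Finset.sum_add_distrib, hψr, hmr] at hminus
  simp_rw [← Finset.mul_sum, hcross] at hplus hminus
  rw [abs_le]; constructor <;> linarith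

lemma trace_tpow_mul {α : Type*} [Fintype α] [DecidableEq α] (M N : Matrix α α ℂ) (t : ℕ) :
    Matrix.trace (tpow M t * tpow N t) = (Matrix.trace (M * N))^t := by
  have hR : Matrix.trace (M * N) = ∑ p : α × α, M p.1 p.2 * N p.2 p.1 := by
    rw [Matrix.trace]
    conv_rhs => rw [Fintype.sum_prod_type]
    apply Finset.sum_congr rfl; intro z _
    simp [Matrix.diag, Matrix.mul_apply]
  calc Matrix.trace (tpow M t * tpow N t)
      = ∑ x : Fin t → α, ∑ y : Fin t → α, ∏ i, (M (x i) (y i) * N (y i) (x i)) := by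
        rw [Matrix.trace]
        apply Finset.sum_congr rfl; intro x _
        rw [Matrix.diag_apply, Matrix.mul_apply]
        apply Finset.sum_congr rfl; intro y _
        rw [tpow, tpow, Matrix.of_apply, Matrix.of_apply, ← Finset.prod_mul_distrib]
    _ = ∑ g : Fin t → α × α, ∏ i, (M (g i).1 (g i).2 * N (g i).2 (g i).1) := by
        rw [Fintype.sum_equiv (Equiv.arrowProdEquivProdArrow (Fin t) (fun _ => α) (fun _ => α))
          (fun g => ∏ i, (M (g i).1 (g i).2 * N (g i).2 (g i).1))
          (fun q => ∏ i, (M (q.1 i) (q.2 i) * N (q.2 i) (q.1 i))) (fun g => rfl)]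
        rw [Fintype.sum_prod_type]
    _ = ∏ i : Fin t, ∑ p : α × α, M p.1 p.2 * N p.2 p.1 := by
        rw [Finset.prod_univ_sum (fun _ => (Finset.univ : Finset (α × α)))
          (fun i p => M p.1 p.2 * N p.2 p.1), Fintype.piFinset_univ]
    _ = (Matrix.trace (M * N))^t := by
        rw [hR, Finset.prod_const, Finset.card_univ, Fintype.card_fin]

lemma trace_W_rankOne (ψ : X n → ℂ) (a : A n) :
    Matrix.trace (PauliW a * rankOne ψ) = cc ψ a := by
  rw [Matrix.trace, cc]
  apply Finset.sum_congr rfl; intro x _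
  rw [Matrix.diag_apply, Matrix.mul_apply, Matrix.mulVec, dotProduct, Finset.mul_sum]
  apply Finset.sum_congr rfl; intro y _
  rw [rankOne, Matrix.of_apply]
  ring

lemma trace_stab (ψ : X n → ℂ) :
    Matrix.trace (stabProj n 4 * tpow (rankOne ψ) 4)
      = (((2:ℂ)^n)^2)⁻¹ * ∑ a : A n, (cc ψ a)^4 := by
  rw [stabProj, Matrix.smul_mul, Matrix.trace_smul, Finset.sum_mul, Matrix.trace_sum]
  have : ∀ a : A n, Matrix.trace (tpow (PauliW a) 4 * tpow (rankOne ψ) 4) = (cc ψ a)^4 := by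
    intro a; rw [trace_tpow_mul, trace_W_rankOne]
  simp_rw [this]
  rw [smul_eq_mul, ← pow_mul']

/-- For a unit vector `ψ ∈ ℂ^d`, `d = 2^n`:
`2d/(d+1) ≤ Σ_a |⟨ψ, W_a ψ⟩|⁴ ≤ d`, and
`α_+(ψ) := tr(P_{n,4}·(|ψ⟩⟨ψ|)^{⊗4})` equals `(1/d²)·Σ_a ⟨ψ, W_a ψ⟩⁴`
(hence `2/(d(d+1)) ≤ α_+(ψ) ≤ 1/d`). -/
theorem stmt11 (n : ℕ) (hn : 1 ≤ n) (ψ : (Fin n → ZMod 2) → ℂ)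
    (hψ : ∑ x, (starRingEnd ℂ) (ψ x) * ψ x = 1) :
    2 * (2 : ℝ) ^ n / ((2 : ℝ) ^ n + 1) ≤
        (∑ a : Fin n → ZMod 2 × ZMod 2,
          ‖∑ x, (starRingEnd ℂ) (ψ x) * Matrix.mulVec (PauliW a) ψ x‖ ^ 4) ∧
      (∑ a : Fin n → ZMod 2 × ZMod 2,
          ‖∑ x, (starRingEnd ℂ) (ψ x) * Matrix.mulVec (PauliW a) ψ x‖ ^ 4)
        ≤ (2 : ℝ) ^ n ∧
      Matrix.trace (stabProj n 4 * tpow (rankOne ψ) 4)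
        = (((2 : ℂ) ^ n) ^ 2)⁻¹ *
            ∑ a : Fin n → ZMod 2 × ZMod 2,
              (∑ x, (starRingEnd ℂ) (ψ x) * Matrix.mulVec (PauliW a) ψ x) ^ 4 := by
  set r : A n → ℝ := fun a => (cc ψ a).re with hr
  have hreal : ∀ a, cc ψ a = (r a : ℂ) := fun a =>
    (Complex.conj_eq_iff_re.mp (cc_conj ψ a)).symm
  have hs : ∀ a : A n, (∑ x, (starRingEnd ℂ) (ψ x) * Matrix.mulVec (PauliW a) ψ x) = cc ψ a :=
    fun a => rfl
  have habs : ∀ a : A n,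
      ‖∑ x, (starRingEnd ℂ) (ψ x) * Matrix.mulVec (PauliW a) ψ x‖ ^ 4
        = r a ^ 4 := by
    intro a
    rw [hs, hreal, Complex.norm_real, Real.norm_eq_abs, ← abs_pow, abs_of_nonneg (by positivity)]
  simp_rw [habs]
  have hsum2 : ∑ a : A n, r a ^ 2 = 2 ^ n := by
    have h := sum_cc_sq ψ hψ
    simp_rw [hreal] at h
    exact_mod_cast h
  have hr1 : ∀ a, |r a| ≤ 1 := fun a => re_cc_le ψ hψ a
  set a0 : A n := fun _ => ((0:ZMod 2), (0:ZMod 2)) with ha0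
  have hr0 : r a0 = 1 := by
    rw [hr]
    show (cc ψ (fun _ => ((0:ZMod 2), (0:ZMod 2)))).re = 1
    rw [cc_zero ψ hψ]; rfl
  set D : ℝ := (2:ℝ)^n with hD
  have hD2 : (2:ℝ) ≤ D := by
    rw [hD]
    calc (2:ℝ) = 2^1 := (pow_one 2).symm
    _ ≤ 2^n := pow_le_pow_right₀ one_le_two hn
  refine ⟨?_, ?_, ?_⟩
  · -- lower bound
    have hmem : a0 ∈ (Finset.univ : Finset (A n)) := Finset.mem_univ _
    have hsplit4 : ∑ a ∈ Finset.univ.erase a0, r a ^ 4 + r a0 ^ 4 = ∑ a : A n, r a ^ 4 :=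
      Finset.sum_erase_add _ _ hmem
    have hsplit2 : ∑ a ∈ Finset.univ.erase a0, r a ^ 2 + r a0 ^ 2 = ∑ a : A n, r a ^ 2 :=
      Finset.sum_erase_add _ _ hmem
    have h4 : ((4:ℝ))^n = D^2 := by
      rw [hD, show (4:ℝ) = 2^2 by norm_num, ← pow_mul, ← pow_mul, mul_comm]
    have hcard : ((Finset.univ.erase a0).card : ℝ) = D^2 - 1 := by
      rw [Finset.card_erase_of_mem hmem, Finset.card_univ]
      have hA : Fintype.card (A n) = 4^n := by
        simp [Fintype.card_fun]
      rw [hA, Nat.cast_sub (Nat.one_le_pow n 4 (by norm_num))]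
      push_cast
      rw [h4]
    have hCS := Finset.sum_mul_sq_le_sq_mul_sq (Finset.univ.erase a0)
      (fun a => r a ^ 2) (fun _ => (1:ℝ))
    simp only [mul_one, one_pow, Finset.sum_const, nsmul_eq_mul] at hCS
    have hpow : ∀ a : A n, (r a ^ 2) ^ 2 = r a ^ 4 := fun a => by ring
    simp_rw [hpow] at hCS
    rw [hcard] at hCS
    have hS2 : ∑ a ∈ Finset.univ.erase a0, r a ^ 2 = D - 1 := by
      have := hsplit2; rw [hsum2, hr0] at this; norm_num at this; linarith
    rw [hS2] at hCS
    have hT : 0 ≤ ∑ a ∈ Finset.univ.erase a0, r a ^ 4 :=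
      Finset.sum_nonneg fun a _ => by positivity
    rw [div_le_iff₀ (by linarith : (0:ℝ) < D + 1)]
    have htot : ∑ a : A n, r a ^ 4 = ∑ a ∈ Finset.univ.erase a0, r a ^ 4 + 1 := by
      rw [← hsplit4, hr0]; norm_num
    rw [htot]
    nlinarith [hCS, hT, hD2]
  · -- upper bound
    rw [← hsum2]
    apply Finset.sum_le_sum
    intro a _
    have h1 : r a ^ 2 ≤ 1 := by
      nlinarith [hr1 a, neg_abs_le (r a), le_abs_self (r a), abs_nonneg (r a)]
    nlinarith [sq_nonneg (r a), h1]
  · -- trace identity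
    exact trace_stab ψ


end
end
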